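/- arXiv:1502.05765 — 5 statements merged into one kernel-verified Lean document; each statement's English description precedes it below -/
import Mathlib

section
/- In the abstract Signorini-problem setting below, the solution u of the gradient scheme satisfies, for every v_D ∈ K_D, the intermediate estimate ‖∇_D v_D − ∇_D u‖_{L²(μ;ℝ^d)} ≤ sqrt( (2/λ̲) G_D(ū, v_D)⁺ + (1/λ̲²) (W + λ̄ S_D(ū, v_D))² ). (Inequality (5.8) established in the proof of Theorem 2.4, in the L²-boundary setting.) -/
open MeasureTheory Matrix
open scoped ENNReal

section Aux

variable {d : ℕ} {Ω : Type*} [MeasurableSpace Ω] {μ : Measure Ω}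

/-- Operator norm bound for a symmetric positive matrix with quadratic form bounded by `lam`. -/
lemma sym_op_norm_bound {lam : ℝ} (hlam : 0 ≤ lam) (A : Matrix (Fin d) (Fin d) ℝ)
    (hA : A.IsSymm)
    (h0 : ∀ ξ : EuclideanSpace ℝ (Fin d), 0 ≤ (inner ℝ (Matrix.toEuclideanLin A ξ) ξ : ℝ))
    (h1 : ∀ ξ : EuclideanSpace ℝ (Fin d),
      (inner ℝ (Matrix.toEuclideanLin A ξ) ξ : ℝ) ≤ lam * ‖ξ‖ ^ 2)
    (ξ : EuclideanSpace ℝ (Fin d)) :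
    ‖Matrix.toEuclideanLin A ξ‖ ≤ lam * ‖ξ‖ := by
  set T := Matrix.toEuclideanLin A with hT
  have hH : A.IsHermitian := by
    have : Aᴴ = Aᵀ := by
      ext i j; simp [Matrix.conjTranspose_apply]
    rw [Matrix.IsHermitian, this]; exact hA
  have hS : T.IsSymmetric := Matrix.isHermitian_iff_isSymmetric.mp hH
  have hsym : ∀ x y : EuclideanSpace ℝ (Fin d), (inner ℝ (T y) x : ℝ) = inner ℝ (T x) y := by
    intro x y
    rw [hS y x, real_inner_comm]
  have key : ∀ x y : EuclideanSpace ℝ (Fin d),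
      (inner ℝ (T x) y : ℝ) ^ 2 ≤ (inner ℝ (T x) x : ℝ) * (inner ℝ (T y) y : ℝ) := by
    intro x y
    have hq : ∀ t : ℝ, 0 ≤ (inner ℝ (T y) y : ℝ) * (t * t)
        + (2 * (inner ℝ (T x) y : ℝ)) * t + (inner ℝ (T x) x : ℝ) := by
      intro t
      have h := h0 (x + t • y)
      have hexp : (inner ℝ (T (x + t • y)) (x + t • y) : ℝ)
          = (inner ℝ (T y) y : ℝ) * (t * t)
            + (2 * (inner ℝ (T x) y : ℝ)) * t + (inner ℝ (T x) x : ℝ) := by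
        rw [map_add, LinearMap.map_smul]
        simp only [inner_add_left, inner_add_right, real_inner_smul_left,
          real_inner_smul_right, smul_eq_mul]
        rw [hsym x y]
        ring
      rw [hexp] at h
      exact h
    have hd := discrim_le_zero hq
    rw [discrim] at hd
    nlinarith [hd]
  by_cases hz : ‖T ξ‖ = 0
  · rw [hz]; positivity
  · have hz' : 0 < ‖T ξ‖ := lt_of_le_of_ne (norm_nonneg _) (Ne.symm hz)
    have h2 := key ξ (T ξ)
    rw [real_inner_self_eq_norm_sq (T ξ)] at h2
    have h3 : (inner ℝ (T ξ) ξ : ℝ) * (inner ℝ (T (T ξ)) (T ξ) : ℝ)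
        ≤ (lam * ‖ξ‖ ^ 2) * (lam * ‖T ξ‖ ^ 2) :=
      mul_le_mul (h1 ξ) (h1 (T ξ)) (h0 (T ξ)) (by positivity)
    have h5' : ‖T ξ‖ ^ 2 * ‖T ξ‖ ^ 2 ≤ (lam * ‖ξ‖) ^ 2 * ‖T ξ‖ ^ 2 := by nlinarith [h2, h3]
    have h5 : ‖T ξ‖ ^ 2 ≤ (lam * ‖ξ‖) ^ 2 :=
      le_of_mul_le_mul_right h5' (pow_pos hz' 2)
    calc ‖T ξ‖ = Real.sqrt (‖T ξ‖ ^ 2) := (Real.sqrt_sq (norm_nonneg _)).symm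
      _ ≤ Real.sqrt ((lam * ‖ξ‖) ^ 2) := Real.sqrt_le_sqrt h5
      _ = lam * ‖ξ‖ := Real.sqrt_sq (by positivity)

lemma aesm_matLam (Λ : Ω → Matrix (Fin d) (Fin d) ℝ)
    (hΛmeas : Measurable fun x i j => Λ x i j)
    {g : Ω → EuclideanSpace ℝ (Fin d)} (hg : AEStronglyMeasurable g μ) :
    AEStronglyMeasurable (fun x => Matrix.toEuclideanLin (Λ x) (g x)) μ := by
  obtain ⟨g', hg'meas, hgg'⟩ := hg.aemeasurable
  refine ⟨fun x => Matrix.toEuclideanLin (Λ x) (g' x), ?_, ?_⟩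
  · apply Measurable.stronglyMeasurable
    have hcoord : ∀ j : Fin d, Measurable fun x => (g' x) j := by
      intro j
      exact (measurable_pi_apply j).comp
        ((MeasurableEquiv.toLp 2 (Fin d → ℝ)).symm.measurable.comp hg'meas)
    have h2 : Measurable fun x =>
        (MeasurableEquiv.toLp 2 (Fin d → ℝ)).symm (Matrix.toEuclideanLin (Λ x) (g' x)) := by
      rw [measurable_pi_iff]
      intro i
      have : (fun x => (MeasurableEquiv.toLp 2 (Fin d → ℝ)).symm
          (Matrix.toEuclideanLin (Λ x) (g' x)) i)
          = fun x => ∑ j, Λ x i j * (g' x) j := by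
        funext x
        simp [MeasurableEquiv.coe_toLp_symm, Matrix.ofLp_toEuclideanLin_apply, Matrix.mulVec,
          dotProduct]
      rw [this]
      exact Finset.measurable_sum _ fun j _ =>
        ((measurable_pi_apply j).comp ((measurable_pi_apply i).comp hΛmeas)).mul (hcoord j)
    have := (MeasurableEquiv.toLp 2 (Fin d → ℝ)).symm.symm.measurable.comp h2
    exact this
  · filter_upwards [hgg'] with x hx
    rw [hx]

lemma memLp_matLam (Λ : Ω → Matrix (Fin d) (Fin d) ℝ)
    (hΛmeas : Measurable fun x i j => Λ x i j)
    {lam : ℝ} (hlam : 0 ≤ lam)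
    (hbd : ∀ᵐ x ∂μ, ∀ ξ : EuclideanSpace ℝ (Fin d),
      ‖Matrix.toEuclideanLin (Λ x) ξ‖ ≤ lam * ‖ξ‖)
    (g : Lp (EuclideanSpace ℝ (Fin d)) 2 μ) :
    MemLp (fun x => Matrix.toEuclideanLin (Λ x) (g x)) 2 μ := by
  refine ⟨aesm_matLam Λ hΛmeas (Lp.aestronglyMeasurable g), ?_⟩
  have hmono : eLpNorm (fun x => Matrix.toEuclideanLin (Λ x) (g x)) 2 μ
      ≤ eLpNorm (lam • fun x => (g : Ω → EuclideanSpace ℝ (Fin d)) x) 2 μ := by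
    apply eLpNorm_mono_ae
    filter_upwards [hbd] with x hx
    simpa [norm_smul, abs_of_nonneg hlam] using hx (g x)
  refine lt_of_le_of_lt hmono ?_
  rw [eLpNorm_const_smul]
  exact ENNReal.mul_lt_top ENNReal.coe_lt_top (Lp.eLpNorm_lt_top g)

lemma L2_inner_mul {α : Type*} [MeasurableSpace α] {m : Measure α} (p q : Lp ℝ 2 m) :
    (inner ℝ p q : ℝ) = ∫ x, p x * q x ∂m := by
  rw [L2.inner_def]
  simp [RCLike.inner_apply, mul_comm]

lemma L2_integrable_mul {α : Type*} [MeasurableSpace α] {m : Measure α} (p q : Lp ℝ 2 m) :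
    Integrable (fun x => p x * q x) m := by
  have := L2.integrable_inner (𝕜 := ℝ) q p
  simpa [RCLike.inner_apply] using this

end Aux

set_option maxHeartbeats 2000000 in
/-- **Intermediate estimate (5.8) in the proof of Theorem 2.4** (Signorini problem,
`L²`-boundary setting): for every `v_D ∈ K_D`, the gradient-scheme solution `u` satisfies
`‖∇_D v_D - ∇_D u‖ ≤ sqrt((2/λ̲) G_D(ū,v_D)⁺ + (1/λ̲²)(W + λ̄ S_D(ū,v_D))²)`. -/
theorem signorini_gradient_scheme_intermediate_estimate
    {Ω : Type*} [MeasurableSpace Ω] (μ : Measure Ω)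
    {B : Type*} [MeasurableSpace B] (ν : Measure B)
    (Γ₁ Γ₂ Γ₃ : Set B)
    (hΓmeas : MeasurableSet Γ₁ ∧ MeasurableSet Γ₂ ∧ MeasurableSet Γ₃)
    (hΓunion : Γ₁ ∪ Γ₂ ∪ Γ₃ = Set.univ)
    (hΓdisj : Disjoint Γ₁ Γ₂ ∧ Disjoint Γ₁ Γ₃ ∧ Disjoint Γ₂ Γ₃)
    (d : ℕ) (hd : 1 ≤ d)
    (X : Type*) [AddCommGroup X] [Module ℝ X] [FiniteDimensional ℝ X] [Nontrivial X]
    (Pi : X →ₗ[ℝ] Lp ℝ 2 μ)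
    (T : X →ₗ[ℝ] Lp ℝ 2 ν)
    (gradD : X →ₗ[ℝ] Lp (EuclideanSpace ℝ (Fin d)) 2 μ)
    (hgradD : Function.Injective gradD)
    (hT₁ : ∀ v : X, ∀ᵐ x ∂ν, x ∈ Γ₁ → (T v) x = 0)
    (Λ : Ω → Matrix (Fin d) (Fin d) ℝ) (hΛmeas : Measurable fun x i j => Λ x i j)
    (lamlo lamhi : ℝ) (hlamlo : 0 < lamlo) (hlam : lamlo ≤ lamhi)
    (hΛ : ∀ᵐ x ∂μ, (Λ x).IsSymm ∧ ∀ ξ : EuclideanSpace ℝ (Fin d),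
        lamlo * ‖ξ‖ ^ 2 ≤ (inner ℝ (Matrix.toEuclideanLin (Λ x) ξ) ξ : ℝ) ∧
        (inner ℝ (Matrix.toEuclideanLin (Λ x) ξ) ξ : ℝ) ≤ lamhi * ‖ξ‖ ^ 2)
    (f uBar : Lp ℝ 2 μ) (G : Lp (EuclideanSpace ℝ (Fin d)) 2 μ)
    (a b phi : Lp ℝ 2 ν)
    (hsig : ∀ᵐ x ∂ν, (x ∈ Γ₁ → b x = 0) ∧ (x ∈ Γ₂ → phi x = 0) ∧
        (x ∈ Γ₃ → b x ≤ a x ∧ phi x ≤ 0 ∧ phi x * (a x - b x) = 0))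
    (KD : Set X)
    (hKD : KD = {v : X | ∀ᵐ x ∂ν, x ∈ Γ₃ → (T v) x ≤ a x})
    (hKDne : KD.Nonempty)
    (u : X) (hu : u ∈ KD)
    (hscheme : ∀ v ∈ KD,
      ∫ x, (inner ℝ (Matrix.toEuclideanLin (Λ x) ((gradD u) x)) ((gradD (u - v)) x) : ℝ) ∂μ
        ≤ ∫ x, (f x) * ((Pi (u - v)) x) ∂μ)
    (vD : X) (hvD : vD ∈ KD) :
    ‖gradD vD - gradD u‖ ≤
      Real.sqrt
        ((2 / lamlo) * max 0 (∫ y, phi y * ((T vD) y - b y) ∂ν)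
          + (1 / lamlo ^ 2) *
            ((⨆ v : {v : X // v ≠ 0},
                |(∫ x, ((inner ℝ ((gradD v.1) x) (Matrix.toEuclideanLin (Λ x) (G x)) : ℝ)
                      - (Pi v.1) x * f x) ∂μ)
                  - ∫ y, phi y * (T v.1) y ∂ν| / ‖gradD v.1‖)
              + lamhi * (‖Pi vD - uBar‖ + ‖gradD vD - G‖)) ^ 2) := by
  classical
  have hlamhi0 : (0:ℝ) ≤ lamhi := le_trans hlamlo.le hlam
  -- pointwise a.e. operator-norm bound
  have hbd : ∀ᵐ x ∂μ, ∀ ξ : EuclideanSpace ℝ (Fin d),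
      ‖Matrix.toEuclideanLin (Λ x) ξ‖ ≤ lamhi * ‖ξ‖ := by
    filter_upwards [hΛ] with x hx
    exact sym_op_norm_bound hlamhi0 (Λ x) hx.1
      (fun ξ => le_trans (by positivity) (hx.2 ξ).1)
      (fun ξ => (hx.2 ξ).2)
  have hmem : ∀ g : Lp (EuclideanSpace ℝ (Fin d)) 2 μ,
      MemLp (fun x => Matrix.toEuclideanLin (Λ x) (g x)) 2 μ :=
    fun g => memLp_matLam Λ hΛmeas hlamhi0 hbd g
  set ΛL : Lp (EuclideanSpace ℝ (Fin d)) 2 μ → Lp (EuclideanSpace ℝ (Fin d)) 2 μ :=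
    fun g => (hmem g).toLp _ with hΛLdef
  have hMfn : ∀ g, (ΛL g : Ω → EuclideanSpace ℝ (Fin d)) =ᵐ[μ]
      fun x => Matrix.toEuclideanLin (Λ x) (g x) := fun g => (hmem g).coeFn_toLp
  have hMint : ∀ g h : Lp (EuclideanSpace ℝ (Fin d)) 2 μ,
      Integrable (fun x => (inner ℝ (Matrix.toEuclideanLin (Λ x) (g x)) (h x) : ℝ)) μ := by
    intro g h
    refine (L2.integrable_inner (𝕜 := ℝ) (ΛL g) h).congr ?_
    filter_upwards [hMfn g] with x hx
    rw [hx]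
  have hMinner : ∀ g h : Lp (EuclideanSpace ℝ (Fin d)) 2 μ,
      (inner ℝ (ΛL g) h : ℝ)
        = ∫ x, (inner ℝ (Matrix.toEuclideanLin (Λ x) (g x)) (h x) : ℝ) ∂μ := by
    intro g h
    rw [L2.inner_def]
    apply integral_congr_ae
    filter_upwards [hMfn g] with x hx
    rw [hx]
  have hMnorm : ∀ g, ‖ΛL g‖ ≤ lamhi * ‖g‖ := by
    intro g
    rw [Lp.norm_toLp]
    have h1 : eLpNorm (fun x => Matrix.toEuclideanLin (Λ x) (g x)) 2 μ
        ≤ eLpNorm (lamhi • fun x => (g : Ω → EuclideanSpace ℝ (Fin d)) x) 2 μ := by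
      apply eLpNorm_mono_ae
      filter_upwards [hbd] with x hx
      simpa [norm_smul, abs_of_nonneg hlamhi0] using hx (g x)
    rw [eLpNorm_const_smul] at h1
    calc (eLpNorm (fun x => Matrix.toEuclideanLin (Λ x) (g x)) 2 μ).toReal
        ≤ ((‖lamhi‖₊ : ℝ≥0∞) * eLpNorm (g : Ω → EuclideanSpace ℝ (Fin d)) 2 μ).toReal := by
          apply ENNReal.toReal_mono
          · exact ENNReal.mul_ne_top ENNReal.coe_ne_top (Lp.eLpNorm_ne_top g)
          · simpa [ENNReal.smul_def, enorm_eq_nnnorm] using h1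
      _ = lamhi * ‖g‖ := by
          rw [ENNReal.toReal_mul, ENNReal.coe_toReal, coe_nnnorm, Real.norm_eq_abs,
            abs_of_nonneg hlamhi0, Lp.norm_def]
  have hcoer : ∀ g : Lp (EuclideanSpace ℝ (Fin d)) 2 μ,
      lamlo * ‖g‖ ^ 2 ≤ (inner ℝ (ΛL g) g : ℝ) := by
    intro g
    have hInt2 : Integrable (fun x => (inner ℝ (g x) (g x) : ℝ)) μ :=
      L2.integrable_inner (𝕜 := ℝ) g g
    have h1 : ∀ᵐ x ∂μ, lamlo * (inner ℝ (g x) (g x) : ℝ)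
        ≤ (inner ℝ (Matrix.toEuclideanLin (Λ x) (g x)) (g x) : ℝ) := by
      filter_upwards [hΛ] with x hx
      have h := (hx.2 (g x)).1
      rwa [real_inner_self_eq_norm_sq]
    have h2 : lamlo * ∫ x, (inner ℝ (g x) (g x) : ℝ) ∂μ
        ≤ ∫ x, (inner ℝ (Matrix.toEuclideanLin (Λ x) (g x)) (g x) : ℝ) ∂μ := by
      rw [← integral_const_mul]
      exact integral_mono_ae (hInt2.const_mul lamlo) (hMint g g) h1
    rw [hMinner g g]
    calc lamlo * ‖g‖ ^ 2 = lamlo * ∫ x, (inner ℝ (g x) (g x) : ℝ) ∂μ := by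
          rw [← L2.inner_def, real_inner_self_eq_norm_sq]
      _ ≤ _ := h2
  have hMsub : ∀ g₁ g₂ h : Lp (EuclideanSpace ℝ (Fin d)) 2 μ,
      (inner ℝ (ΛL (g₁ - g₂)) h : ℝ) = (inner ℝ (ΛL g₁) h : ℝ) - (inner ℝ (ΛL g₂) h : ℝ) := by
    intro g₁ g₂ h
    rw [hMinner, hMinner, hMinner, ← integral_sub (hMint g₁ h) (hMint g₂ h)]
    apply integral_congr_ae
    filter_upwards [Lp.coeFn_sub g₁ g₂] with x hx
    rw [hx, _root_.Pi.sub_apply, LinearMap.map_sub, inner_sub_left]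
  -- identification of the supremum numerator with a linear functional
  have hnum : ∀ v : X,
      ((∫ x, ((inner ℝ ((gradD v) x) (Matrix.toEuclideanLin (Λ x) (G x)) : ℝ)
          - (Pi v) x * f x) ∂μ) - ∫ y, phi y * (T v) y ∂ν)
      = (inner ℝ (ΛL G) (gradD v) : ℝ) - (inner ℝ (Pi v) f : ℝ) - (inner ℝ phi (T v) : ℝ) := by
    intro v
    have i1 : Integrable
        (fun x => (inner ℝ ((gradD v) x) (Matrix.toEuclideanLin (Λ x) (G x)) : ℝ)) μ :=
      (hMint G (gradD v)).congr (Filter.Eventually.of_forall fun x => real_inner_comm _ _)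
    have i2 : Integrable (fun x => (Pi v) x * f x) μ := L2_integrable_mul _ _
    rw [integral_sub i1 i2]
    have e1 : ∫ x, (inner ℝ ((gradD v) x) (Matrix.toEuclideanLin (Λ x) (G x)) : ℝ) ∂μ
        = (inner ℝ (ΛL G) (gradD v) : ℝ) := by
      rw [hMinner G (gradD v)]
      exact integral_congr_ae (Filter.Eventually.of_forall fun x => real_inner_comm _ _)
    rw [e1, ← L2_inner_mul (Pi v) f, ← L2_inner_mul phi (T v)]
  -- the linear functional and its boundedness
  obtain ⟨L, hLapp⟩ : ∃ L : X →ₗ[ℝ] ℝ, ∀ v : X,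
      L v = (inner ℝ (ΛL G) (gradD v) : ℝ) - (inner ℝ (Pi v) f : ℝ)
        - (inner ℝ phi (T v) : ℝ) := by
    refine ⟨{ toFun := fun v => (inner ℝ (ΛL G) (gradD v) : ℝ) - (inner ℝ (Pi v) f : ℝ) - (inner ℝ phi (T v) : ℝ),
              map_add' := ?_,
              map_smul' := ?_ }, fun v => rfl⟩
    · intro p q
      simp only [map_add, inner_add_right, inner_add_left]
      ring
    · intro c p
      simp only [_root_.map_smul, real_inner_smul_right, real_inner_smul_left,
        RingHom.id_apply, smul_eq_mul]
      ring
  have hLnum : ∀ v : X,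
      ((∫ x, ((inner ℝ ((gradD v) x) (Matrix.toEuclideanLin (Λ x) (G x)) : ℝ)
          - (Pi v) x * f x) ∂μ) - ∫ y, phi y * (T v) y ∂ν) = L v := by
    intro v
    rw [hLapp v]
    exact hnum v
  have hbound : ∃ C : ℝ, ∀ v : X, |L v| ≤ C * ‖gradD v‖ := by
    let eqv := LinearEquiv.ofInjective gradD hgradD
    let L' : LinearMap.range gradD →ₗ[ℝ] ℝ := L.comp eqv.symm.toLinearMap
    let clm := LinearMap.toContinuousLinearMap L'
    refine ⟨‖clm‖, fun v => ?_⟩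
    have h1 : L v = clm (eqv v) := by
      show L v = L' (eqv v)
      simp only [L', LinearMap.comp_apply, LinearEquiv.coe_coe, LinearEquiv.symm_apply_apply]
    have h2 : ‖eqv v‖ = ‖gradD v‖ := by
      have : ((eqv v : LinearMap.range gradD) : Lp (EuclideanSpace ℝ (Fin d)) 2 μ)
          = gradD v := by simp [eqv, LinearEquiv.ofInjective_apply]
      rw [← this]
      rfl
    calc |L v| = ‖clm (eqv v)‖ := by rw [h1, Real.norm_eq_abs]
      _ ≤ ‖clm‖ * ‖eqv v‖ := clm.le_opNorm _
      _ = ‖clm‖ * ‖gradD v‖ := by rw [h2]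
  obtain ⟨C, hC⟩ := hbound
  have hgradne : ∀ v : X, v ≠ 0 → ‖gradD v‖ ≠ 0 := by
    intro v hv h
    apply hv
    apply hgradD
    rw [map_zero]
    exact norm_eq_zero.mp h
  have hWbdd : BddAbove (Set.range fun v : {v : X // v ≠ 0} =>
      |(∫ x, ((inner ℝ ((gradD v.1) x) (Matrix.toEuclideanLin (Λ x) (G x)) : ℝ)
          - (Pi v.1) x * f x) ∂μ) - ∫ y, phi y * (T v.1) y ∂ν| / ‖gradD v.1‖) := by
    refine ⟨max C 0, ?_⟩
    rintro r ⟨v, rfl⟩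
    dsimp only
    have hpos : 0 < ‖gradD v.1‖ :=
      lt_of_le_of_ne (norm_nonneg _) (Ne.symm (hgradne v.1 v.2))
    rw [div_le_iff₀ hpos, hLnum v.1]
    calc |L v.1| ≤ C * ‖gradD v.1‖ := hC v.1
      _ ≤ max C 0 * ‖gradD v.1‖ :=
        mul_le_mul_of_nonneg_right (le_max_left _ _) (norm_nonneg _)
  set Wsup := ⨆ v : {v : X // v ≠ 0},
      |(∫ x, ((inner ℝ ((gradD v.1) x) (Matrix.toEuclideanLin (Λ x) (G x)) : ℝ)
            - (Pi v.1) x * f x) ∂μ)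
        - ∫ y, phi y * (T v.1) y ∂ν| / ‖gradD v.1‖ with hWsupdef
  have hWnonneg : 0 ≤ Wsup := by
    obtain ⟨v₀, hv₀⟩ := exists_ne (0 : X)
    have h1 : (0:ℝ) ≤ |(∫ x, ((inner ℝ ((gradD v₀) x)
          (Matrix.toEuclideanLin (Λ x) (G x)) : ℝ) - (Pi v₀) x * f x) ∂μ)
        - ∫ y, phi y * (T v₀) y ∂ν| / ‖gradD v₀‖ := by positivity
    exact le_trans h1 (le_ciSup hWbdd ⟨v₀, hv₀⟩)
  -- main case split
  by_cases hzero : gradD vD - gradD u = 0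
  · rw [hzero, norm_zero]
    exact Real.sqrt_nonneg _
  -- abbreviations
  set t := ‖gradD vD - gradD u‖ with htdef
  set A' := max 0 (∫ y, phi y * ((T vD) y - b y) ∂ν) with hA'def
  set S := ‖Pi vD - uBar‖ + ‖gradD vD - G‖ with hSdef
  have htpos : 0 < t := by
    rw [htdef]
    exact norm_pos_iff.mpr hzero
  set w := vD - u with hwdef
  have hgw : gradD w = gradD vD - gradD u := map_sub gradD vD u
  have hw0 : w ≠ 0 := fun h => hzero (by rw [← hgw, h, map_zero])
  have hPiw : Pi w = Pi vD - Pi u := map_sub Pi vD u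
  have hTw : T w = T vD - T u := map_sub T vD u
  -- scheme inequality
  have hsch := hscheme vD hvD
  rw [← hMinner (gradD u) (gradD (u - vD)), ← L2_inner_mul f (Pi (u - vD))] at hsch
  have e1 : gradD (u - vD) = -(gradD vD - gradD u) := by rw [map_sub]; abel
  have e2 : Pi (u - vD) = -(Pi vD - Pi u) := by rw [map_sub]; abel
  rw [e1, e2, inner_neg_right, inner_neg_right] at hsch
  have hsch' : (inner ℝ f (Pi vD - Pi u) : ℝ)
      ≤ (inner ℝ (ΛL (gradD u)) (gradD vD - gradD u) : ℝ) := by linarith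
  -- boundary terms
  have hu3 : ∀ᵐ x ∂ν, x ∈ Γ₃ → (T u) x ≤ a x := by rw [hKD] at hu; exact hu
  have hbpos : 0 ≤ (inner ℝ phi (T u - b) : ℝ) := by
    rw [L2_inner_mul]
    apply integral_nonneg_of_ae
    filter_upwards [hsig, hT₁ u, hu3, Lp.coeFn_sub (T u) b] with x hs h1 h3 hsub
    rw [hsub]
    have hx : x ∈ Γ₁ ∪ Γ₂ ∪ Γ₃ := by rw [hΓunion]; trivial
    simp only [_root_.Pi.sub_apply, _root_.Pi.zero_apply]
    rcases hx with (hx | hx) | hx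
    · rw [h1 hx, hs.1 hx]; simp
    · rw [hs.2.1 hx]; simp
    · obtain ⟨hba, hphi, hcomp⟩ := hs.2.2 hx
      have hTa := h3 hx
      have h4 : 0 ≤ phi x * ((T u) x - a x) := by
        have h4' := mul_nonneg (neg_nonneg.mpr hphi)
          (neg_nonneg.mpr (by linarith : (T u) x - a x ≤ 0))
        nlinarith [h4']
      have h5 : phi x * ((T u) x - b x)
          = phi x * ((T u) x - a x) + phi x * (a x - b x) := by ring
      rw [h5, hcomp]
      linarith
  have hA2 : (inner ℝ phi (T vD - b) : ℝ) = ∫ y, phi y * ((T vD) y - b y) ∂ν := by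
    rw [L2_inner_mul]
    apply integral_congr_ae
    filter_upwards [Lp.coeFn_sub (T vD) b] with y hy
    rw [hy]
    simp
  have hbnd : (inner ℝ phi (T w) : ℝ) ≤ A' := by
    have h7 : (inner ℝ phi (T w) : ℝ)
        = (inner ℝ phi (T vD - b) : ℝ) - (inner ℝ phi (T u - b) : ℝ) := by
      rw [hTw, inner_sub_right, inner_sub_right, inner_sub_right]
      ring
    rw [h7, hA2]
    have : (∫ y, phi y * ((T vD) y - b y) ∂ν) ≤ A' := le_max_right _ _
    linarith
  -- W bound at w
  have hWw : L w ≤ Wsup * t := by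
    have hFle : |(∫ x, ((inner ℝ ((gradD w) x) (Matrix.toEuclideanLin (Λ x) (G x)) : ℝ)
          - (Pi w) x * f x) ∂μ) - ∫ y, phi y * (T w) y ∂ν| / ‖gradD w‖ ≤ Wsup := by
      exact le_ciSup hWbdd ⟨w, hw0⟩
    have hgwnorm : ‖gradD w‖ = t := by rw [hgw]
    rw [hgwnorm] at hFle
    have h8 : |L w| ≤ Wsup * t := by
      rw [← hLnum w] at *
      calc |(∫ x, ((inner ℝ ((gradD w) x) (Matrix.toEuclideanLin (Λ x) (G x)) : ℝ)
            - (Pi w) x * f x) ∂μ) - ∫ y, phi y * (T w) y ∂ν|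
          = |(∫ x, ((inner ℝ ((gradD w) x) (Matrix.toEuclideanLin (Λ x) (G x)) : ℝ)
            - (Pi w) x * f x) ∂μ) - ∫ y, phi y * (T w) y ∂ν| / t * t := by
            field_simp
        _ ≤ Wsup * t := mul_le_mul_of_nonneg_right hFle htpos.le
    calc L w ≤ |L w| := le_abs_self _
      _ ≤ Wsup * t := h8
  have hLw : L w = (inner ℝ (ΛL G) (gradD vD - gradD u) : ℝ)
      - (inner ℝ (Pi vD - Pi u) f : ℝ) - (inner ℝ phi (T w) : ℝ) := by
    rw [hLapp w, hgw, hPiw]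
  -- key chain
  have hstep5 : (inner ℝ (ΛL (gradD vD - G)) (gradD vD - gradD u) : ℝ)
      ≤ lamhi * ‖gradD vD - G‖ * t := by
    calc (inner ℝ (ΛL (gradD vD - G)) (gradD vD - gradD u) : ℝ)
        ≤ ‖ΛL (gradD vD - G)‖ * ‖gradD vD - gradD u‖ := real_inner_le_norm _ _
      _ ≤ (lamhi * ‖gradD vD - G‖) * t :=
          mul_le_mul_of_nonneg_right (hMnorm _) (norm_nonneg _)
      _ = lamhi * ‖gradD vD - G‖ * t := by ring
  have key : lamlo * t ^ 2 ≤ A' + (Wsup + lamhi * S) * t := by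
    have c1 : lamlo * t ^ 2
        ≤ (inner ℝ (ΛL (gradD vD - gradD u)) (gradD vD - gradD u) : ℝ) :=
      hcoer (gradD vD - gradD u)
    have c2 : (inner ℝ (ΛL (gradD vD - gradD u)) (gradD vD - gradD u) : ℝ)
        = (inner ℝ (ΛL (gradD vD)) (gradD vD - gradD u) : ℝ)
          - (inner ℝ (ΛL (gradD u)) (gradD vD - gradD u) : ℝ) := hMsub _ _ _
    have c3 : (inner ℝ (ΛL (gradD vD)) (gradD vD - gradD u) : ℝ)
        - (inner ℝ (ΛL G) (gradD vD - gradD u) : ℝ)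
        = (inner ℝ (ΛL (gradD vD - G)) (gradD vD - gradD u) : ℝ) := (hMsub _ _ _).symm
    have c4 : (inner ℝ (Pi vD - Pi u) f : ℝ) = (inner ℝ f (Pi vD - Pi u) : ℝ) :=
      real_inner_comm _ _
    have c5 : lamhi * ‖gradD vD - G‖ * t ≤ lamhi * S * t := by
      apply mul_le_mul_of_nonneg_right _ htpos.le
      apply mul_le_mul_of_nonneg_left _ hlamhi0
      rw [hSdef]
      exact le_add_of_nonneg_left (norm_nonneg _)
    nlinarith [hWw, hLw, hstep5, hbnd, hsch', c1, c2, c3, c4, c5]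
  -- conclude
  apply Real.le_sqrt_of_sq_le
  have h10 : t ^ 2 ≤ (2 * lamlo * A' + (Wsup + lamhi * S) ^ 2) / lamlo ^ 2 := by
    rw [le_div_iff₀ (by positivity)]
    nlinarith [key, sq_nonneg ((Wsup + lamhi * S) - lamlo * t), hlamlo]
  have h11 : (2 * lamlo * A' + (Wsup + lamhi * S) ^ 2) / lamlo ^ 2
      = (2 / lamlo) * A' + (1 / lamlo ^ 2) * (Wsup + lamhi * S) ^ 2 := by
    field_simp
  rw [h11] at h10
  exact h10
end

section
/- In the abstract Signorini-problem setting below, the solution u of the gradient scheme satisfies, for every v_D ∈ K_D, the gradient error estimate ‖∇_D u − G‖_{L²(μ;ℝ^d)} ≤ sqrt( (2/λ̲) G_D(ū, v_D)⁺ ) + (1/λ̲) [ W + (λ̄ + λ̲) S_D(ū, v_D) ]. (Estimate (2.7) of Theorem 2.4, in the L²-boundary setting.) -/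
open MeasureTheory

section Aux

lemma aux_bilin_key {E : Type*} [NormedAddCommGroup E] [InnerProductSpace ℝ E]
    (A : E →ₗ[ℝ] E) (lamhi : ℝ) (hpos : 0 ≤ lamhi)
    (hsym : ∀ ξ η : E, (inner ℝ (A ξ) η : ℝ) = inner ℝ ξ (A η))
    (h0 : ∀ ξ : E, 0 ≤ (inner ℝ (A ξ) ξ : ℝ))
    (hub : ∀ ξ : E, (inner ℝ (A ξ) ξ : ℝ) ≤ lamhi * ‖ξ‖ ^ 2)
    (ξ η : E) : (inner ℝ (A ξ) η : ℝ) ≤ lamhi * ‖ξ‖ * ‖η‖ := by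
  have h4 : (inner ℝ (A η) ξ : ℝ) = inner ℝ (A ξ) η := by
    rw [← real_inner_comm (A η) ξ, ← hsym ξ η]
  have expand : (inner ℝ (A (‖η‖ • ξ + ‖ξ‖ • η)) (‖η‖ • ξ + ‖ξ‖ • η) : ℝ)
      - (inner ℝ (A (‖η‖ • ξ - ‖ξ‖ • η)) (‖η‖ • ξ - ‖ξ‖ • η) : ℝ)
      = 4 * (‖ξ‖ * ‖η‖) * (inner ℝ (A ξ) η : ℝ) := by
    simp only [map_add, map_sub, LinearMap.map_smul, inner_add_left, inner_add_right,
      inner_sub_left, inner_sub_right, real_inner_smul_left, real_inner_smul_right,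
      smul_eq_mul]
    linear_combination (2 * ‖ξ‖ * ‖η‖) * h4
  have hQ0 := h0 (‖η‖ • ξ - ‖ξ‖ • η)
  have hQub := hub (‖η‖ • ξ + ‖ξ‖ • η)
  have hnorm : ‖‖η‖ • ξ + ‖ξ‖ • η‖^2 = ‖‖η‖•ξ‖^2 + 2 * inner ℝ (‖η‖•ξ) (‖ξ‖•η) + ‖‖ξ‖•η‖^2 :=
    norm_add_sq_real _ _
  have hCS : (inner ℝ (‖η‖•ξ) (‖ξ‖•η) : ℝ) ≤ ‖ξ‖*‖η‖*(‖ξ‖*‖η‖) := by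
    have := real_inner_le_norm (‖η‖•ξ) (‖ξ‖•η)
    rw [norm_smul, norm_smul] at this
    simp only [Real.norm_eq_abs, abs_norm] at this
    nlinarith [this]
  have hn1 : ‖‖η‖•ξ‖ = ‖η‖*‖ξ‖ := by rw [norm_smul]; simp
  have hn2 : ‖‖ξ‖•η‖ = ‖ξ‖*‖η‖ := by rw [norm_smul]; simp
  have h5 : lamhi * ‖‖η‖ • ξ + ‖ξ‖ • η‖^2
      = lamhi * ((‖η‖*‖ξ‖)^2 + 2 * inner ℝ (‖η‖•ξ) (‖ξ‖•η) + (‖ξ‖*‖η‖)^2) := by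
    rw [hnorm, hn1, hn2]
  have key : (inner ℝ (A ξ) η : ℝ) * (‖ξ‖ * ‖η‖) ≤ lamhi * (‖ξ‖^2 * ‖η‖^2) := by
    nlinarith [expand, hQ0, hQub, h5, mul_le_mul_of_nonneg_left hCS hpos]
  rcases eq_or_lt_of_le (norm_nonneg ξ) with h | h
  · have hz : ξ = 0 := by rwa [eq_comm, norm_eq_zero] at h
    have : (inner ℝ (A ξ) η : ℝ) = 0 := by simp [hz]
    rw [this]; positivity
  rcases eq_or_lt_of_le (norm_nonneg η) with h' | h'
  · have hz : η = 0 := by rwa [eq_comm, norm_eq_zero] at h'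
    have : (inner ℝ (A ξ) η : ℝ) = 0 := by simp [hz]
    rw [this]; positivity
  have hst : 0 < ‖ξ‖ * ‖η‖ := mul_pos h h'
  rw [← mul_le_mul_iff_of_pos_right hst]
  calc (inner ℝ (A ξ) η : ℝ) * (‖ξ‖ * ‖η‖) ≤ lamhi * (‖ξ‖^2 * ‖η‖^2) := key
    _ = lamhi * ‖ξ‖ * ‖η‖ * (‖ξ‖ * ‖η‖) := by ring

lemma aux_bilin_abs {E : Type*} [NormedAddCommGroup E] [InnerProductSpace ℝ E]
    (A : E →ₗ[ℝ] E) (lamhi : ℝ) (hpos : 0 ≤ lamhi)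
    (hsym : ∀ ξ η : E, (inner ℝ (A ξ) η : ℝ) = inner ℝ ξ (A η))
    (h0 : ∀ ξ : E, 0 ≤ (inner ℝ (A ξ) ξ : ℝ))
    (hub : ∀ ξ : E, (inner ℝ (A ξ) ξ : ℝ) ≤ lamhi * ‖ξ‖ ^ 2)
    (ξ η : E) : |(inner ℝ (A ξ) η : ℝ)| ≤ lamhi * ‖ξ‖ * ‖η‖ := by
  rw [abs_le]
  constructor
  · have := aux_bilin_key A lamhi hpos hsym h0 hub ξ (-η)
    simp only [inner_neg_right, norm_neg] at this
    linarith
  · exact aux_bilin_key A lamhi hpos hsym h0 hub ξ η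

lemma aux_op_norm {E : Type*} [NormedAddCommGroup E] [InnerProductSpace ℝ E]
    (A : E →ₗ[ℝ] E) (lamhi : ℝ) (hpos : 0 ≤ lamhi)
    (hsym : ∀ ξ η : E, (inner ℝ (A ξ) η : ℝ) = inner ℝ ξ (A η))
    (h0 : ∀ ξ : E, 0 ≤ (inner ℝ (A ξ) ξ : ℝ))
    (hub : ∀ ξ : E, (inner ℝ (A ξ) ξ : ℝ) ≤ lamhi * ‖ξ‖ ^ 2)
    (ξ : E) : ‖A ξ‖ ≤ lamhi * ‖ξ‖ := by
  have h := aux_bilin_key A lamhi hpos hsym h0 hub ξ (A ξ)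
  rw [real_inner_self_eq_norm_sq] at h
  rcases eq_or_lt_of_le (norm_nonneg (A ξ)) with h' | h'
  · rw [← h']; positivity
  · nlinarith [h, h']

lemma aux_matvec_coord {d : ℕ} (M : Matrix (Fin d) (Fin d) ℝ) (v : EuclideanSpace ℝ (Fin d))
    (i : Fin d) : (Matrix.toEuclideanLin M v) i = ∑ j, M i j * v j := by
  simp [Matrix.toEuclideanLin_apply, Matrix.mulVec, dotProduct]

lemma aux_inner_sum {d : ℕ} (M : Matrix (Fin d) (Fin d) ℝ) (v w : EuclideanSpace ℝ (Fin d)) :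
    (inner ℝ (Matrix.toEuclideanLin M v) w : ℝ) = ∑ i, (∑ j, M i j * v j) * w i := by
  simp [PiLp.inner_apply, Matrix.toEuclideanLin_apply, Matrix.mulVec, dotProduct,
    RCLike.inner_apply, mul_comm]

lemma aux_symm {d : ℕ} (M : Matrix (Fin d) (Fin d) ℝ) (h : M.IsSymm)
    (ξ η : EuclideanSpace ℝ (Fin d)) :
    (inner ℝ (Matrix.toEuclideanLin M ξ) η : ℝ) = inner ℝ ξ (Matrix.toEuclideanLin M η) := by
  rw [real_inner_comm (Matrix.toEuclideanLin M η) ξ, aux_inner_sum, aux_inner_sum]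
  simp_rw [Finset.sum_mul]
  rw [Finset.sum_comm]
  refine Finset.sum_congr rfl fun i _ => Finset.sum_congr rfl fun j _ => ?_
  rw [h.apply j i]
  ring

lemma aux_meas {Ω : Type*} [MeasurableSpace Ω] {μ : Measure Ω} {d : ℕ}
    (Λ : Ω → Matrix (Fin d) (Fin d) ℝ) (hΛ : Measurable fun x i j => Λ x i j)
    {H K : Ω → EuclideanSpace ℝ (Fin d)}
    (hH : AEStronglyMeasurable H μ) (hK : AEStronglyMeasurable K μ) :
    AEStronglyMeasurable (fun x => (inner ℝ (Matrix.toEuclideanLin (Λ x) (H x)) (K x) : ℝ)) μ := by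
  have hcoord : ∀ i : Fin d, AEStronglyMeasurable (fun x => H x i) μ := fun i =>
    (EuclideanSpace.proj i : EuclideanSpace ℝ (Fin d) →L[ℝ] ℝ).continuous.comp_aestronglyMeasurable hH
  have hcoordK : ∀ i : Fin d, AEStronglyMeasurable (fun x => K x i) μ := fun i =>
    (EuclideanSpace.proj i : EuclideanSpace ℝ (Fin d) →L[ℝ] ℝ).continuous.comp_aestronglyMeasurable hK
  have heq : (fun x => (inner ℝ (Matrix.toEuclideanLin (Λ x) (H x)) (K x) : ℝ))
      = fun x => ∑ i, (∑ j, Λ x i j * H x j) * K x i := by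
    funext x; exact aux_inner_sum _ _ _
  rw [heq]
  apply Finset.aestronglyMeasurable_fun_sum
  intro i _
  apply AEStronglyMeasurable.mul _ (hcoordK i)
  apply Finset.aestronglyMeasurable_fun_sum
  intro j _
  exact ((hΛ.eval.eval).aestronglyMeasurable).mul (hcoord j)

lemma aux_vec_meas {Ω : Type*} [MeasurableSpace Ω] {μ : Measure Ω} {d : ℕ}
    (Λ : Ω → Matrix (Fin d) (Fin d) ℝ) (hΛ : Measurable fun x i j => Λ x i j)
    {H : Ω → EuclideanSpace ℝ (Fin d)} (hH : AEStronglyMeasurable H μ) :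
    AEStronglyMeasurable (fun x => Matrix.toEuclideanLin (Λ x) (H x)) μ := by
  have hcoord : ∀ i : Fin d, AEStronglyMeasurable (fun x => H x i) μ := fun i =>
    (EuclideanSpace.proj i : EuclideanSpace ℝ (Fin d) →L[ℝ] ℝ).continuous.comp_aestronglyMeasurable hH
  have heq : (fun x => Matrix.toEuclideanLin (Λ x) (H x))
      = fun x => ∑ i, (∑ j, Λ x i j * H x j) • (EuclideanSpace.single i (1:ℝ)) := by
    funext x
    apply PiLp.ext
    intro k
    rw [aux_matvec_coord]
    simp [WithLp.ofLp_sum, Finset.sum_apply, PiLp.smul_apply, EuclideanSpace.single_apply, Pi.single_apply]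
  rw [heq]
  apply Finset.aestronglyMeasurable_fun_sum
  intro i _
  apply AEStronglyMeasurable.smul_const
  apply Finset.aestronglyMeasurable_fun_sum
  intro j _
  exact ((hΛ.eval.eval).aestronglyMeasurable).mul (hcoord j)

lemma aux_holder {Ω : Type*} [MeasurableSpace Ω] {μ : Measure Ω}
    {E : Type*} [NormedAddCommGroup E] [InnerProductSpace ℝ E] (H K : Lp E 2 μ) :
    Integrable (fun x => ‖H x‖ * ‖K x‖) μ ∧ ∫ x, ‖H x‖ * ‖K x‖ ∂μ ≤ ‖H‖ * ‖K‖ := by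
  set Hn : Lp ℝ 2 μ := ((Lp.memLp H).norm).toLp (fun x => ‖H x‖) with hHn
  set Kn : Lp ℝ 2 μ := ((Lp.memLp K).norm).toLp (fun x => ‖K x‖) with hKn
  have hH1 : Hn =ᵐ[μ] fun x => ‖H x‖ := MemLp.coeFn_toLp _
  have hK1 : Kn =ᵐ[μ] fun x => ‖K x‖ := MemLp.coeFn_toLp _
  have hnH : ‖Hn‖ = ‖H‖ := by rw [Lp.norm_toLp, Lp.norm_def, eLpNorm_norm]
  have hnK : ‖Kn‖ = ‖K‖ := by rw [Lp.norm_toLp, Lp.norm_def, eLpNorm_norm]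
  have hint : Integrable (fun x => Hn x * Kn x) μ := by
    have := L2.integrable_inner (𝕜 := ℝ) Hn Kn
    simpa [RCLike.inner_apply, starRingEnd_apply, mul_comm] using this
  have heq : (fun x => ‖H x‖ * ‖K x‖) =ᵐ[μ] fun x => Hn x * Kn x := by
    filter_upwards [hH1, hK1] with x h1 h2
    rw [h1, h2]
  constructor
  · exact hint.congr heq.symm
  · have h1 : ∫ x, ‖H x‖ * ‖K x‖ ∂μ = ∫ x, Hn x * Kn x ∂μ := integral_congr_ae heq
    have h2 : ∫ x, Hn x * Kn x ∂μ = (inner ℝ Hn Kn : ℝ) := by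
      rw [L2.inner_def]
      apply integral_congr_ae
      filter_upwards with x
      simp [RCLike.inner_apply, starRingEnd_apply, mul_comm]
    rw [h1, h2, ← hnH, ← hnK]
    exact real_inner_le_norm Hn Kn

lemma aux_quad (lamlo t c P : ℝ) (hl : 0 < lamlo) (hc : 0 ≤ c) (hP : 0 ≤ P) (ht : 0 ≤ t)
    (h : lamlo * t^2 ≤ P + c*t) : t ≤ Real.sqrt ((2/lamlo)*P) + c/lamlo := by
  set s := Real.sqrt ((2/lamlo)*P) with hs
  have hs0 : 0 ≤ s := Real.sqrt_nonneg _
  have hs2 : lamlo * s^2 = 2*P := by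
    rw [hs, Real.sq_sqrt (by positivity)]
    field_simp
  rcases eq_or_lt_of_le ht with ht0 | ht0
  · rw [← ht0]; positivity
  by_contra hgt
  push_neg at hgt
  have hgt' : lamlo * s + c < lamlo * t := by
    have h1 : lamlo * (s + c/lamlo) < lamlo * t := mul_lt_mul_of_pos_left hgt hl
    have h2 : lamlo * (s + c/lamlo) = lamlo * s + c := by field_simp
    linarith
  have e1 : 0 < (lamlo*t - lamlo*s - c) * t := mul_pos (by linarith) ht0
  have e2 : 0 ≤ (lamlo*t - lamlo*s - c) * s := mul_nonneg (by linarith) hs0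
  have e3 : 0 ≤ c * s := mul_nonneg hc hs0
  nlinarith [h, hs2, e1, e2, e3, hP]

end Aux

set_option maxHeartbeats 1000000 in
/-- **Estimate (2.7) of Theorem 2.4** (Signorini problem, `L²`-boundary setting,
gradient error estimate): for every `v_D ∈ K_D`, the gradient-scheme solution `u`
satisfies `‖∇_D u - G‖ ≤ sqrt((2/λ̲) G_D(ū,v_D)⁺) + (1/λ̲)[W + (λ̄+λ̲) S_D(ū,v_D)]`. -/
theorem signorini_gradient_scheme_gradient_error_estimate
    {Ω : Type*} [MeasurableSpace Ω] (μ : Measure Ω)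
    {B : Type*} [MeasurableSpace B] (ν : Measure B)
    (Γ₁ Γ₂ Γ₃ : Set B)
    (hΓmeas : MeasurableSet Γ₁ ∧ MeasurableSet Γ₂ ∧ MeasurableSet Γ₃)
    (hΓunion : Γ₁ ∪ Γ₂ ∪ Γ₃ = Set.univ)
    (hΓdisj : Disjoint Γ₁ Γ₂ ∧ Disjoint Γ₁ Γ₃ ∧ Disjoint Γ₂ Γ₃)
    (d : ℕ) (hd : 1 ≤ d)
    (X : Type*) [AddCommGroup X] [Module ℝ X] [FiniteDimensional ℝ X] [Nontrivial X]
    (Pi : X →ₗ[ℝ] Lp ℝ 2 μ)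
    (T : X →ₗ[ℝ] Lp ℝ 2 ν)
    (gradD : X →ₗ[ℝ] Lp (EuclideanSpace ℝ (Fin d)) 2 μ)
    (hgradD : Function.Injective gradD)
    (hT₁ : ∀ v : X, ∀ᵐ x ∂ν, x ∈ Γ₁ → (T v) x = 0)
    (Λ : Ω → Matrix (Fin d) (Fin d) ℝ) (hΛmeas : Measurable fun x i j => Λ x i j)
    (lamlo lamhi : ℝ) (hlamlo : 0 < lamlo) (hlam : lamlo ≤ lamhi)
    (hΛ : ∀ᵐ x ∂μ, (Λ x).IsSymm ∧ ∀ ξ : EuclideanSpace ℝ (Fin d),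
        lamlo * ‖ξ‖ ^ 2 ≤ (inner ℝ (Matrix.toEuclideanLin (Λ x) ξ) ξ : ℝ) ∧
        (inner ℝ (Matrix.toEuclideanLin (Λ x) ξ) ξ : ℝ) ≤ lamhi * ‖ξ‖ ^ 2)
    (f uBar : Lp ℝ 2 μ) (G : Lp (EuclideanSpace ℝ (Fin d)) 2 μ)
    (a b phi : Lp ℝ 2 ν)
    (hsig : ∀ᵐ x ∂ν, (x ∈ Γ₁ → b x = 0) ∧ (x ∈ Γ₂ → phi x = 0) ∧
        (x ∈ Γ₃ → b x ≤ a x ∧ phi x ≤ 0 ∧ phi x * (a x - b x) = 0))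
    (KD : Set X)
    (hKD : KD = {v : X | ∀ᵐ x ∂ν, x ∈ Γ₃ → (T v) x ≤ a x})
    (hKDne : KD.Nonempty)
    (u : X) (hu : u ∈ KD)
    (hscheme : ∀ v ∈ KD,
      ∫ x, (inner ℝ (Matrix.toEuclideanLin (Λ x) ((gradD u) x)) ((gradD (u - v)) x) : ℝ) ∂μ
        ≤ ∫ x, (f x) * ((Pi (u - v)) x) ∂μ)
    (vD : X) (hvD : vD ∈ KD) :
    ‖gradD u - G‖ ≤
      Real.sqrt ((2 / lamlo) * max 0 (∫ y, phi y * ((T vD) y - b y) ∂ν))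
        + (1 / lamlo) *
          ((⨆ v : {v : X // v ≠ 0},
                |(∫ x, ((inner ℝ ((gradD v.1) x) (Matrix.toEuclideanLin (Λ x) (G x)) : ℝ)
                      - (Pi v.1) x * f x) ∂μ)
                  - ∫ y, phi y * (T v.1) y ∂ν| / ‖gradD v.1‖)
            + (lamhi + lamlo) * (‖Pi vD - uBar‖ + ‖gradD vD - G‖)) := by
  classical
  have hlamhi : (0:ℝ) ≤ lamhi := le_trans hlamlo.le hlam
  -- a.e. pointwise properties of the diffusion matrix
  have hae : ∀ᵐ x ∂μ,
      (∀ ξ η : EuclideanSpace ℝ (Fin d),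
        |(inner ℝ (Matrix.toEuclideanLin (Λ x) ξ) η : ℝ)| ≤ lamhi * ‖ξ‖ * ‖η‖) ∧
      (∀ ξ : EuclideanSpace ℝ (Fin d),
        lamlo * ‖ξ‖^2 ≤ (inner ℝ (Matrix.toEuclideanLin (Λ x) ξ) ξ : ℝ)) ∧
      (∀ ξ : EuclideanSpace ℝ (Fin d), ‖Matrix.toEuclideanLin (Λ x) ξ‖ ≤ lamhi * ‖ξ‖) := by
    filter_upwards [hΛ] with x hx
    obtain ⟨hsymm, hb⟩ := hx
    have hsym' : ∀ ξ η : EuclideanSpace ℝ (Fin d),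
        (inner ℝ (Matrix.toEuclideanLin (Λ x) ξ) η : ℝ) = inner ℝ ξ (Matrix.toEuclideanLin (Λ x) η) :=
      aux_symm _ hsymm
    have h0 : ∀ ξ : EuclideanSpace ℝ (Fin d),
        0 ≤ (inner ℝ (Matrix.toEuclideanLin (Λ x) ξ) ξ : ℝ) := fun ξ =>
      le_trans (by positivity) (hb ξ).1
    have hub : ∀ ξ : EuclideanSpace ℝ (Fin d),
        (inner ℝ (Matrix.toEuclideanLin (Λ x) ξ) ξ : ℝ) ≤ lamhi * ‖ξ‖^2 := fun ξ => (hb ξ).2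
    exact ⟨aux_bilin_abs _ lamhi hlamhi hsym' h0 hub, fun ξ => (hb ξ).1,
      aux_op_norm _ lamhi hlamhi hsym' h0 hub⟩
  -- integrability of the bilinear integrand
  have hint : ∀ H K : Lp (EuclideanSpace ℝ (Fin d)) 2 μ,
      Integrable (fun x => (inner ℝ (Matrix.toEuclideanLin (Λ x) (H x)) (K x) : ℝ)) μ := by
    intro H K
    refine Integrable.mono' (((aux_holder H K).1).const_mul lamhi)
      (aux_meas Λ hΛmeas (Lp.aestronglyMeasurable H) (Lp.aestronglyMeasurable K)) ?_
    filter_upwards [hae] with x hx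
    rw [Real.norm_eq_abs]
    calc |(inner ℝ (Matrix.toEuclideanLin (Λ x) (H x)) (K x) : ℝ)|
        ≤ lamhi * ‖H x‖ * ‖K x‖ := hx.1 _ _
      _ = lamhi * (‖H x‖ * ‖K x‖) := by ring
  -- L² bound for the bilinear form
  have hJb : ∀ H K : Lp (EuclideanSpace ℝ (Fin d)) 2 μ,
      |∫ x, (inner ℝ (Matrix.toEuclideanLin (Λ x) (H x)) (K x) : ℝ) ∂μ| ≤ lamhi * ‖H‖ * ‖K‖ := by
    intro H K
    have h1 : |∫ x, (inner ℝ (Matrix.toEuclideanLin (Λ x) (H x)) (K x) : ℝ) ∂μ|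
        ≤ ∫ x, |(inner ℝ (Matrix.toEuclideanLin (Λ x) (H x)) (K x) : ℝ)| ∂μ := by
      rw [← Real.norm_eq_abs]
      refine (norm_integral_le_integral_norm _).trans_eq ?_
      simp [Real.norm_eq_abs]
    have h2 : ∫ x, |(inner ℝ (Matrix.toEuclideanLin (Λ x) (H x)) (K x) : ℝ)| ∂μ
        ≤ ∫ x, lamhi * (‖H x‖ * ‖K x‖) ∂μ := by
      refine integral_mono_ae (hint H K).abs (((aux_holder H K).1).const_mul lamhi) ?_
      filter_upwards [hae] with x hx
      calc |(inner ℝ (Matrix.toEuclideanLin (Λ x) (H x)) (K x) : ℝ)|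
          ≤ lamhi * ‖H x‖ * ‖K x‖ := hx.1 _ _
        _ = lamhi * (‖H x‖ * ‖K x‖) := by ring
    have h3 : ∫ x, lamhi * (‖H x‖ * ‖K x‖) ∂μ = lamhi * ∫ x, ‖H x‖ * ‖K x‖ ∂μ :=
      integral_const_mul lamhi _
    have h4 := (aux_holder H K).2
    calc |∫ x, (inner ℝ (Matrix.toEuclideanLin (Λ x) (H x)) (K x) : ℝ) ∂μ|
        ≤ ∫ x, lamhi * (‖H x‖ * ‖K x‖) ∂μ := h1.trans h2
      _ = lamhi * ∫ x, ‖H x‖ * ‖K x‖ ∂μ := h3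
      _ ≤ lamhi * (‖H‖ * ‖K‖) := mul_le_mul_of_nonneg_left h4 hlamhi
      _ = lamhi * ‖H‖ * ‖K‖ := by ring
  -- coercivity
  have hcoer : ∀ H : Lp (EuclideanSpace ℝ (Fin d)) 2 μ,
      lamlo * ‖H‖^2 ≤ ∫ x, (inner ℝ (Matrix.toEuclideanLin (Λ x) (H x)) (H x) : ℝ) ∂μ := by
    intro H
    have hn : ‖H‖^2 = ∫ x, ‖H x‖^2 ∂μ := by
      have h1 : (inner ℝ H H : ℝ) = ‖H‖^2 := real_inner_self_eq_norm_sq H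
      rw [L2.inner_def] at h1
      rw [← h1]
      apply integral_congr_ae
      filter_upwards with x
      rw [real_inner_self_eq_norm_sq]
    have hisq : Integrable (fun x => ‖H x‖^2) μ := by
      refine ((aux_holder H H).1).congr ?_
      filter_upwards with x
      ring
    have h2 : lamlo * ‖H‖^2 = ∫ x, lamlo * ‖H x‖^2 ∂μ := by
      rw [hn, integral_const_mul]
    rw [h2]
    refine integral_mono_ae (hisq.const_mul lamlo) (hint H H) ?_
    filter_upwards [hae] with x hx
    exact hx.2.1 _
  -- integrability of products of real L² functions
  have hintν : ∀ g h : Lp ℝ 2 ν, Integrable (fun y => g y * h y) ν := by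
    intro g h
    have := L2.integrable_inner (𝕜 := ℝ) g h
    simpa [RCLike.inner_apply, starRingEnd_apply, mul_comm] using this
  have hintμ2 : ∀ g h : Lp ℝ 2 μ, Integrable (fun y => g y * h y) μ := by
    intro g h
    have := L2.integrable_inner (𝕜 := ℝ) g h
    simpa [RCLike.inner_apply, starRingEnd_apply, mul_comm] using this
  -- boundary sign condition for the exact solution
  have hu' : ∀ᵐ y ∂ν, y ∈ Γ₃ → (T u) y ≤ a y := by
    rw [hKD] at hu; exact hu
  have hbnd : 0 ≤ ∫ y, phi y * ((T u) y - b y) ∂ν := by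
    apply integral_nonneg_of_ae
    filter_upwards [hsig, hT₁ u, hu'] with y hy h1 h3
    show (0:ℝ) ≤ phi y * ((T u) y - b y)
    obtain ⟨hb1, hb2, hb3⟩ := hy
    have hcover : y ∈ Γ₁ ∪ Γ₂ ∪ Γ₃ := by rw [hΓunion]; trivial
    rcases hcover with (hy1 | hy2) | hy3
    · rw [h1 hy1, hb1 hy1]; simp
    · rw [hb2 hy2]; simp
    · obtain ⟨hba, hphi, hcomp⟩ := hb3 hy3
      have hkey : 0 ≤ (-(phi y)) * (a y - (T u) y) :=
        mul_nonneg (neg_nonneg.2 hphi) (sub_nonneg.2 (h3 hy3))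
      nlinarith [hkey, hcomp]
  have hsplit : ∀ g : Lp ℝ 2 ν, ∫ y, phi y * (g y - b y) ∂ν
      = ∫ y, phi y * g y ∂ν - ∫ y, phi y * b y ∂ν := by
    intro g
    rw [← integral_sub (hintν phi g) (hintν phi b)]
    apply integral_congr_ae
    filter_upwards with y
    ring
  -- the Lp element representing x ↦ Λ(x) ∇ū(x)
  have hmemAG : MemLp (fun x => Matrix.toEuclideanLin (Λ x) (G x)) 2 μ := by
    refine MemLp.of_le_mul (c := lamhi) (Lp.memLp G)
      (aux_vec_meas Λ hΛmeas (Lp.aestronglyMeasurable G)) ?_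
    filter_upwards [hae] with x hx
    exact hx.2.2 _
  set AG : Lp (EuclideanSpace ℝ (Fin d)) 2 μ := hmemAG.toLp _ with hAGdef
  have hAG : AG =ᵐ[μ] fun x => Matrix.toEuclideanLin (Λ x) (G x) := MemLp.coeFn_toLp _
  -- the limit-conformity functional, in linear form
  set F' : X →ₗ[ℝ] ℝ :=
    (((innerSL ℝ AG) : Lp (EuclideanSpace ℝ (Fin d)) 2 μ →L[ℝ] ℝ).toLinearMap.comp gradD)
      - (((innerSL ℝ f) : Lp ℝ 2 μ →L[ℝ] ℝ).toLinearMap.comp Pi)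
      - (((innerSL ℝ phi) : Lp ℝ 2 ν →L[ℝ] ℝ).toLinearMap.comp T) with hF'def
  have hF'apply : ∀ v : X,
      F' v = (inner ℝ AG (gradD v) : ℝ) - (inner ℝ f (Pi v) : ℝ) - (inner ℝ phi (T v) : ℝ) := by
    intro v
    simp [hF'def, LinearMap.sub_apply, LinearMap.comp_apply, innerSL_apply_apply]
  -- identifying the numerator of the limit-conformity defect
  have hEF : ∀ v : X,
      ((∫ x, ((inner ℝ ((gradD v) x) (Matrix.toEuclideanLin (Λ x) (G x)) : ℝ)
          - (Pi v) x * f x) ∂μ) - ∫ y, phi y * (T v) y ∂ν) = F' v := by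
    intro v
    have i1 : Integrable
        (fun x => (inner ℝ ((gradD v) x) (Matrix.toEuclideanLin (Λ x) (G x)) : ℝ)) μ := by
      refine (L2.integrable_inner (𝕜 := ℝ) (gradD v) AG).congr ?_
      filter_upwards [hAG] with x hx
      rw [hx]
    have i2 : Integrable (fun x => (Pi v) x * f x) μ := hintμ2 (Pi v) f
    have e1 : (∫ x, ((inner ℝ ((gradD v) x) (Matrix.toEuclideanLin (Λ x) (G x)) : ℝ)
        - (Pi v) x * f x) ∂μ)
        = (inner ℝ (gradD v) AG : ℝ) - (inner ℝ (Pi v) f : ℝ) := by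
      have eA : (inner ℝ (gradD v) AG : ℝ)
          = ∫ x, (inner ℝ ((gradD v) x) (Matrix.toEuclideanLin (Λ x) (G x)) : ℝ) ∂μ := by
        rw [L2.inner_def]
        apply integral_congr_ae
        filter_upwards [hAG] with x hx
        rw [hx]
      have eB : (inner ℝ (Pi v) f : ℝ) = ∫ x, (Pi v) x * f x ∂μ := by
        rw [L2.inner_def]
        apply integral_congr_ae
        filter_upwards with x
        simp [RCLike.inner_apply, starRingEnd_apply, mul_comm]
      rw [integral_sub i1 i2, eA, eB]
    have e2 : ∫ y, phi y * (T v) y ∂ν = (inner ℝ phi (T v) : ℝ) := by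
      rw [L2.inner_def]
      apply integral_congr_ae
      filter_upwards with y
      simp [RCLike.inner_apply, starRingEnd_apply, mul_comm]
    rw [e1, e2, hF'apply v, real_inner_comm AG (gradD v), real_inner_comm f (Pi v)]
  -- operator-norm bound for F' through the range of gradD
  have hgradpos : ∀ v : X, v ≠ 0 → 0 < ‖gradD v‖ := by
    intro v hv
    rw [norm_pos_iff]
    intro h0
    exact hv (hgradD (by rw [h0, map_zero]))
  set e : X ≃ₗ[ℝ] LinearMap.range gradD := LinearEquiv.ofInjective gradD hgradD with hedef
  set ℓ : (LinearMap.range gradD) →L[ℝ] ℝ :=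
    LinearMap.toContinuousLinearMap (F'.comp (e.symm : LinearMap.range gradD →ₗ[ℝ] X)) with hldef
  have hFb : ∀ v : X, |F' v| ≤ ‖ℓ‖ * ‖gradD v‖ := by
    intro v
    have h1 : ℓ (e v) = F' v := by
      rw [hldef]
      simp only [LinearMap.coe_toContinuousLinearMap', LinearMap.comp_apply,
        LinearEquiv.coe_coe, LinearEquiv.symm_apply_apply]
    have h2 : ‖e v‖ = ‖gradD v‖ := by
      rw [hedef, Submodule.coe_norm]
      simp [LinearEquiv.ofInjective_apply]
    calc |F' v| = ‖ℓ (e v)‖ := by rw [h1, Real.norm_eq_abs]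
      _ ≤ ‖ℓ‖ * ‖e v‖ := ℓ.le_opNorm _
      _ = ‖ℓ‖ * ‖gradD v‖ := by rw [h2]
  -- the limit-conformity defect
  set W : ℝ := (⨆ v : {v : X // v ≠ 0},
      |(∫ x, ((inner ℝ ((gradD v.1) x) (Matrix.toEuclideanLin (Λ x) (G x)) : ℝ)
            - (Pi v.1) x * f x) ∂μ)
        - ∫ y, phi y * (T v.1) y ∂ν| / ‖gradD v.1‖) with hWdef
  set P : ℝ := max 0 (∫ y, phi y * ((T vD) y - b y) ∂ν) with hPdef
  have hP0 : 0 ≤ P := le_max_left _ _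
  have hWnn : 0 ≤ W := by
    rw [hWdef]
    exact Real.iSup_nonneg fun v => by positivity
  have hbdd : BddAbove (Set.range fun v : {v : X // v ≠ 0} =>
      |(∫ x, ((inner ℝ ((gradD v.1) x) (Matrix.toEuclideanLin (Λ x) (G x)) : ℝ)
            - (Pi v.1) x * f x) ∂μ)
        - ∫ y, phi y * (T v.1) y ∂ν| / ‖gradD v.1‖) := by
    refine ⟨‖ℓ‖, ?_⟩
    rintro r ⟨v, rfl⟩
    simp only
    rw [div_le_iff₀ (hgradpos v.1 v.2), hEF v.1]
    exact hFb v.1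
  have hWge : ∀ v : X, v ≠ 0 → |F' v| ≤ W * ‖gradD v‖ := by
    intro v hv
    have h := le_ciSup hbdd (⟨v, hv⟩ : {v : X // v ≠ 0})
    simp only at h
    rw [div_le_iff₀ (hgradpos v hv), hEF v] at h
    rw [hWdef]
    exact h
  set nG : ℝ := ‖gradD vD - G‖ with hnGdef
  set nP : ℝ := ‖Pi vD - uBar‖ with hnPdef
  have hnG0 : 0 ≤ nG := norm_nonneg _
  have hnP0 : 0 ≤ nP := norm_nonneg _
  clear_value W P nG nP
  by_cases hcase : u = vD
  · -- degenerate case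
    rw [hcase, ← hnGdef]
    have h11 : lamlo * nG ≤ W + (lamhi + lamlo) * (nP + nG) := by
      nlinarith only [hnP0, hnG0, hlamhi, hlamlo.le, hWnn]
    have h12 : nG ≤ (1/lamlo) * (W + (lamhi + lamlo) * (nP + nG)) := by
      calc nG = (lamlo * nG)/lamlo := by field_simp
        _ ≤ (W + (lamhi + lamlo) * (nP + nG))/lamlo := (div_le_div_iff_of_pos_right hlamlo).2 h11
        _ = (1/lamlo) * (W + (lamhi + lamlo) * (nP + nG)) := by ring
    linarith only [Real.sqrt_nonneg ((2 / lamlo) * P), h12]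
  · have hw : u - vD ≠ 0 := sub_ne_zero.2 hcase
    -- abbreviations
    set gu := gradD u with hgu
    set gv := gradD vD with hgv
    set gw := gradD u - gradD vD with hgwdef
    have hgw : gradD (u - vD) = gw := by rw [map_sub, hgwdef]
    have hPw : Pi (u - vD) = Pi u - Pi vD := map_sub _ _ _
    have hgwc : (gw : Ω → EuclideanSpace ℝ (Fin d)) =ᵐ[μ] fun x => gu x - gv x := Lp.coeFn_sub _ _
    -- the scheme inequality
    have hS := hscheme vD hvD
    rw [hgw, hPw] at hS
    -- r1 : coercivity
    have r1 : lamlo * ‖gw‖^2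
        ≤ ∫ x, (inner ℝ (Matrix.toEuclideanLin (Λ x) (gw x)) (gw x) : ℝ) ∂μ := hcoer gw
    -- r2 : split the bilinear form
    have r2 : ∫ x, (inner ℝ (Matrix.toEuclideanLin (Λ x) (gw x)) (gw x) : ℝ) ∂μ
        = (∫ x, (inner ℝ (Matrix.toEuclideanLin (Λ x) (gu x)) (gw x) : ℝ) ∂μ)
          - ∫ x, (inner ℝ (Matrix.toEuclideanLin (Λ x) (gv x)) (gw x) : ℝ) ∂μ := by
      rw [← integral_sub (hint gu gw) (hint gv gw)]
      apply integral_congr_ae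
      filter_upwards [hgwc] with x hx
      rw [hx, map_sub, inner_sub_left]
    -- r3 : the scheme gives
    have r3 : ∫ x, (inner ℝ (Matrix.toEuclideanLin (Λ x) (gu x)) (gw x) : ℝ) ∂μ
        ≤ ∫ x, f x * ((Pi u - Pi vD) x) ∂μ := hS
    -- r4 : limit conformity applied to w = u - vD
    have hFw := hWge (u - vD) hw
    have hFw' : -(W * ‖gw‖) ≤ F' (u - vD) := by
      rw [hgw] at hFw
      linarith [neg_abs_le (F' (u - vD)), abs_nonneg (F' (u - vD)), hFw]
    have hF'w : F' (u - vD)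
        = (∫ x, (inner ℝ (Matrix.toEuclideanLin (Λ x) (G x)) (gw x) : ℝ) ∂μ)
          - (∫ x, ((Pi u - Pi vD) x) * f x ∂μ)
          - ((∫ y, phi y * (T u) y ∂ν) - ∫ y, phi y * (T vD) y ∂ν) := by
      rw [hF'apply (u - vD)]
      have eA : (inner ℝ AG (gradD (u - vD)) : ℝ)
          = ∫ x, (inner ℝ (Matrix.toEuclideanLin (Λ x) (G x)) (gw x) : ℝ) ∂μ := by
        rw [L2.inner_def]
        apply integral_congr_ae
        rw [hgw]
        filter_upwards [hAG] with x hx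
        rw [hx]
      have eB : (inner ℝ f (Pi (u - vD)) : ℝ) = ∫ x, ((Pi u - Pi vD) x) * f x ∂μ := by
        rw [L2.inner_def, hPw]
        apply integral_congr_ae
        filter_upwards with x
        simp [RCLike.inner_apply, starRingEnd_apply, mul_comm]
      have eC : (inner ℝ phi (T (u - vD)) : ℝ)
          = (∫ y, phi y * (T u) y ∂ν) - ∫ y, phi y * (T vD) y ∂ν := by
        rw [L2.inner_def, ← integral_sub (hintν phi (T u)) (hintν phi (T vD))]
        apply integral_congr_ae
        have : (T (u - vD) : B → ℝ) =ᵐ[ν] fun y => (T u) y - (T vD) y := by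
          rw [map_sub]
          exact Lp.coeFn_sub _ _
        filter_upwards [this] with y hy
        rw [hy]
        simp [RCLike.inner_apply, starRingEnd_apply]
        ring
      rw [eA, eB, eC]
    -- r5 : boundary term estimate
    have r5 : (∫ y, phi y * (T vD) y ∂ν) - (∫ y, phi y * (T u) y ∂ν) ≤ P := by
      have h1 := hsplit (T vD)
      have h2 := hsplit (T u)
      have h3 : (∫ y, phi y * ((T u) y - b y) ∂ν) ≥ 0 := hbnd
      have h4 : (∫ y, phi y * ((T vD) y - b y) ∂ν) ≤ P := by rw [hPdef]; exact le_max_right _ _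
      linarith only [h1, h2, h3, h4]
    -- r6 : comparison of gradients
    have r6 : (∫ x, (inner ℝ (Matrix.toEuclideanLin (Λ x) (G x)) (gw x) : ℝ) ∂μ)
        - (∫ x, (inner ℝ (Matrix.toEuclideanLin (Λ x) (gv x)) (gw x) : ℝ) ∂μ)
        ≤ lamhi * nG * ‖gw‖ := by
      have hdiff : (∫ x, (inner ℝ (Matrix.toEuclideanLin (Λ x) (G x)) (gw x) : ℝ) ∂μ)
          - (∫ x, (inner ℝ (Matrix.toEuclideanLin (Λ x) (gv x)) (gw x) : ℝ) ∂μ)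
          = ∫ x, (inner ℝ (Matrix.toEuclideanLin (Λ x) ((G - gv) x)) (gw x) : ℝ) ∂μ := by
        rw [← integral_sub (hint G gw) (hint gv gw)]
        apply integral_congr_ae
        filter_upwards [Lp.coeFn_sub G gv] with x hx
        rw [hx]
        show _ = (inner ℝ (Matrix.toEuclideanLin (Λ x) (G x - gv x)) (gw x) : ℝ)
        rw [map_sub, inner_sub_left]
      rw [hdiff]
      have := hJb (G - gv) gw
      have hGgv : ‖G - gv‖ = nG := by rw [hnGdef, hgv, norm_sub_rev]
      have habs := le_abs_self (∫ x, (inner ℝ (Matrix.toEuclideanLin (Λ x) ((G - gv) x)) (gw x) : ℝ) ∂μ)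
      calc ∫ x, (inner ℝ (Matrix.toEuclideanLin (Λ x) ((G - gv) x)) (gw x) : ℝ) ∂μ
          ≤ |∫ x, (inner ℝ (Matrix.toEuclideanLin (Λ x) ((G - gv) x)) (gw x) : ℝ) ∂μ| := habs
        _ ≤ lamhi * ‖G - gv‖ * ‖gw‖ := this
        _ = lamhi * nG * ‖gw‖ := by rw [hGgv]
    -- assemble the quadratic inequality
    have hPfeq : ∫ x, f x * ((Pi u - Pi vD) x) ∂μ = ∫ x, ((Pi u - Pi vD) x) * f x ∂μ := by
      apply integral_congr_ae
      filter_upwards with x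
      ring
    have hquad : lamlo * ‖gw‖^2 ≤ P + (W + lamhi * nG) * ‖gw‖ := by
      have c1 : lamlo * ‖gw‖^2
          ≤ (∫ x, (inner ℝ (Matrix.toEuclideanLin (Λ x) (gu x)) (gw x) : ℝ) ∂μ)
            - ∫ x, (inner ℝ (Matrix.toEuclideanLin (Λ x) (gv x)) (gw x) : ℝ) ∂μ := by
        rw [← r2]; exact r1
      have c2 : (∫ x, ((Pi u - Pi vD) x) * f x ∂μ)
          ≤ (∫ x, (inner ℝ (Matrix.toEuclideanLin (Λ x) (G x)) (gw x) : ℝ) ∂μ)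
            - ((∫ y, phi y * (T u) y ∂ν) - ∫ y, phi y * (T vD) y ∂ν) + W * ‖gw‖ := by
        have := hFw'
        rw [hF'w] at this
        linarith only [this]
      have c3 := r3
      rw [hPfeq] at c3
      linarith only [c1, c2, c3, r5, r6]
    -- quadratic resolution
    have ht0 : (0:ℝ) ≤ ‖gw‖ := norm_nonneg _
    have hc0 : (0:ℝ) ≤ W + lamhi * nG := by positivity
    have hquad2 := aux_quad lamlo (‖gw‖) (W + lamhi * nG) P hlamlo hc0 hP0 ht0 hquad
    -- final triangle inequality and arithmetic
    have htri : ‖gradD u - G‖ ≤ ‖gw‖ + nG := by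
      have : gradD u - G = gw + (gradD vD - G) := by rw [hgwdef]; abel
      rw [this, hnGdef]
      exact norm_add_le _ _
    have harith : (W + lamhi * nG)/lamlo + nG ≤ (1/lamlo) * (W + (lamhi + lamlo) * (nP + nG)) := by
      have h10 : (W + lamhi * nG) + lamlo * nG ≤ W + (lamhi + lamlo) * (nP + nG) := by
        nlinarith only [hnP0, hnG0, hlamhi, hlamlo.le]
      calc (W + lamhi * nG)/lamlo + nG = ((W + lamhi * nG) + lamlo * nG)/lamlo := by
            field_simp
        _ ≤ (W + (lamhi + lamlo) * (nP + nG))/lamlo := by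
            exact (div_le_div_iff_of_pos_right hlamlo).2 h10
        _ = (1/lamlo) * (W + (lamhi + lamlo) * (nP + nG)) := by ring
    calc ‖gradD u - G‖ ≤ ‖gw‖ + nG := htri
      _ ≤ (Real.sqrt ((2/lamlo) * P) + (W + lamhi * nG)/lamlo) + nG := by linarith only [hquad2]
      _ ≤ Real.sqrt ((2/lamlo) * P) + (1/lamlo) * (W + (lamhi + lamlo) * (nP + nG)) := by
          linarith only [harith]
end

section
/- Stampacchia-type lemma used in the proofs of Theorems 2.8 and 2.9: let n ≥ 1 and let w : ℝ^n → ℝ be differentiable at every point. Then for Lebesgue-almost every point x of the set {y ∈ ℝ^n : w(y) = 0}, the Fréchet derivative of w at x is zero. -/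
set_option maxHeartbeats 1000000

open MeasureTheory Metric Set Filter

/-- **Stampacchia-type lemma** (used in the proofs of Theorems 2.8 and 2.9): if
`w : ℝⁿ → ℝ` is differentiable at every point, then for Lebesgue-a.e. point `x` of the
set `{y : w y = 0}`, the Fréchet derivative of `w` at `x` vanishes. -/
theorem stampacchia_fderiv_eq_zero_ae_on_zero_set
    (n : ℕ) (hn : 1 ≤ n)
    (w : EuclideanSpace ℝ (Fin n) → ℝ) (hw : Differentiable ℝ w) :
    ∀ᵐ x ∂(volume.restrict {y : EuclideanSpace ℝ (Fin n) | w y = 0}),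
      fderiv ℝ w x = 0 := by
  set s : Set (EuclideanSpace ℝ (Fin n)) := {y | w y = 0} with hs_def
  have hs : MeasurableSet s :=
    (isClosed_eq hw.continuous continuous_const).measurableSet
  filter_upwards [Besicovitch.ae_tendsto_measure_inter_div volume s,
    ae_restrict_mem hs] with x hx hxs
  by_contra hL
  set L := fderiv ℝ w x with hLdef
  obtain ⟨v, hv⟩ : ∃ v, L v ≠ 0 := by
    by_contra h
    push_neg at h
    exact hL (ContinuousLinearMap.ext fun v => h v)
  -- normalize to a vector `u` of norm 1/2 with `L u = c > 0`
  set v' : EuclideanSpace ℝ (Fin n) := (L v)⁻¹ • v with hv'def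
  have hLv' : L v' = 1 := by
    simp [hv'def, _root_.map_smul, inv_mul_cancel₀ hv]
  have hv'norm : 0 < ‖v'‖ := by
    rcases eq_or_ne v' 0 with h | h
    · simp [h] at hLv'
    · exact norm_pos_iff.mpr h
  set c : ℝ := (2 * ‖v'‖)⁻¹ with hcdef
  have hc : 0 < c := by positivity
  set u : EuclideanSpace ℝ (Fin n) := c • v' with hudef
  have hLu : L u = c := by simp [hudef, _root_.map_smul, hLv']
  have hunorm : ‖u‖ = 1 / 2 := by
    rw [hudef, norm_smul, Real.norm_eq_abs, abs_of_pos hc, hcdef]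
    field_simp
  have hLnorm : 0 < ‖L‖ := norm_pos_iff.mpr hL
  set ε : ℝ := c / (4 * ‖L‖) with hεdef
  have hε : 0 < ε := by positivity
  have hcL : c ≤ ‖L‖ / 2 := by
    calc c = L u := hLu.symm
    _ ≤ ‖L u‖ := le_abs_self _
    _ ≤ ‖L‖ * ‖u‖ := L.le_opNorm u
    _ = ‖L‖ / 2 := by rw [hunorm]; ring
  have hε2 : ε ≤ 1 / 2 := by
    rw [hεdef, div_le_div_iff₀ (by positivity) (by norm_num)]
    nlinarith
  have hεL : ε * ‖L‖ = c / 4 := by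
    rw [hεdef]; field_simp
  -- little-o estimate
  have hlo := ((hw x).hasFDerivAt.isLittleO).def (show (0:ℝ) < c / 2 by positivity)
  rw [Metric.eventually_nhds_iff] at hlo
  obtain ⟨R, hR, hball⟩ := hlo
  -- key geometric fact: for 0 < r < R the small ball avoids s
  have key : ∀ r ∈ Ioo (0:ℝ) R,
      closedBall (x + r • u) (ε * r) ∩ s = ∅ := by
    intro r hr
    rcases hr with ⟨hr0, hrR⟩
    ext y
    simp only [mem_inter_iff, mem_empty_iff_false, iff_false, not_and]
    intro hy hys
    have hyd : ‖y - (x + r • u)‖ ≤ ε * r := by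
      rw [mem_closedBall, dist_eq_norm] at hy; exact hy
    have hyx : ‖y - x‖ ≤ r := by
      have hrw : y - x = (y - (x + r • u)) + r • u := by abel
      calc ‖y - x‖ = ‖(y - (x + r • u)) + r • u‖ := by rw [hrw]
      _ ≤ ‖y - (x + r • u)‖ + ‖r • u‖ := norm_add_le _ _
      _ ≤ ε * r + r * (1/2) := by
          rw [norm_smul, Real.norm_eq_abs, abs_of_pos hr0, hunorm]
          linarith
      _ ≤ r := by
          have := mul_le_mul_of_nonneg_right hε2 hr0.le
          linarith
    have hlt : dist y x < R := by
      rw [dist_eq_norm]; exact lt_of_le_of_lt hyx hrR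
    have hsmall := hball hlt
    -- estimate L (y - x)
    have hL1 : |L (y - (x + r • u))| ≤ c / 4 * r := by
      calc |L (y - (x + r • u))| ≤ ‖L‖ * ‖y - (x + r • u)‖ := L.le_opNorm _
      _ ≤ ‖L‖ * (ε * r) := by
          apply mul_le_mul_of_nonneg_left hyd hLnorm.le
      _ = c / 4 * r := by rw [← hεL]; ring
    have hL2 : L (y - x) = L (y - (x + r • u)) + r * c := by
      have : (y : EuclideanSpace ℝ (Fin n)) - x = (y - (x + r • u)) + r • u := by
        abel
      rw [this, map_add, _root_.map_smul, hLu, smul_eq_mul]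
    have hwx : w x = 0 := hxs
    have hws : w y = 0 := hys
    have hs' : ‖w y - w x - L (y - x)‖ ≤ c / 2 * ‖y - x‖ := hsmall
    rw [hwx, hws] at hs'
    simp only [zero_sub, sub_zero, norm_neg, Real.norm_eq_abs] at hs'
    have h1 : |L (y - x)| ≤ c / 2 * r := by
      refine hs'.trans ?_
      exact mul_le_mul_of_nonneg_left hyx (by positivity)
    have h2 : L (y - x) ≥ r * c - c / 4 * r := by
      rw [hL2]
      have := (abs_le.mp hL1).1
      linarith
    nlinarith [abs_le.mp h1, h2]
  -- measure-theoretic consequence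
  have hfr : Module.finrank ℝ (EuclideanSpace ℝ (Fin n)) = n := finrank_euclideanSpace_fin
  haveI : Nontrivial (EuclideanSpace ℝ (Fin n)) := by
    apply Module.nontrivial_of_finrank_pos (R := ℝ)
    rw [hfr]; omega
  set k : ENNReal := ENNReal.ofReal (ε ^ n) with hkdef
  have hk0 : k ≠ 0 := by
    simp [hkdef, ENNReal.ofReal_eq_zero, not_le]
    positivity
  have hratio : ∀ r ∈ Ioo (0:ℝ) R,
      volume (s ∩ closedBall x r) / volume (closedBall x r) ≤ 1 - k := by
    intro r hr
    rcases hr with ⟨hr0, hrR⟩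
    set B := closedBall x r with hBdef
    set B' := closedBall (x + r • u) (ε * r) with hB'def
    have hB'B : B' ⊆ B := by
      intro y hy
      rw [mem_closedBall, dist_eq_norm] at hy ⊢
      have hrw : y - x = (y - (x + r • u)) + r • u := by abel
      calc ‖y - x‖ = ‖(y - (x + r • u)) + r • u‖ := by rw [hrw]
      _ ≤ ‖y - (x + r • u)‖ + ‖r • u‖ := norm_add_le _ _
      _ ≤ ε * r + r * (1/2) := by
          rw [norm_smul, Real.norm_eq_abs, abs_of_pos hr0, hunorm]
          linarith
      _ ≤ r := by
          have := mul_le_mul_of_nonneg_right hε2 hr0.le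
          linarith
    have hdisj : Disjoint B' (s ∩ B) := by
      rw [Set.disjoint_left]
      intro y hy hy2
      have := key r ⟨hr0, hrR⟩
      have : y ∈ closedBall (x + r • u) (ε * r) ∩ s := ⟨hy, hy2.1⟩
      rw [key r ⟨hr0, hrR⟩] at this
      exact this
    have hsum : volume B' + volume (s ∩ B) ≤ volume B := by
      rw [← measure_union hdisj (hs.inter measurableSet_closedBall)]
      apply measure_mono
      exact union_subset hB'B inter_subset_right
    have hBvol : volume B = ENNReal.ofReal (r ^ n) * volume (ball (0:EuclideanSpace ℝ (Fin n)) 1) := by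
      rw [hBdef, Measure.addHaar_closedBall volume x hr0.le, hfr]
    have hB'vol : volume B' = k * volume B := by
      rw [hB'def, Measure.addHaar_closedBall volume _ (by positivity : (0:ℝ) ≤ ε * r), hfr,
        hBvol, mul_pow, ENNReal.ofReal_mul (by positivity), hkdef, mul_assoc]
    have hBpos : volume B ≠ 0 := (measure_closedBall_pos volume x hr0).ne'
    have hBfin : volume B ≠ ⊤ := measure_closedBall_lt_top.ne
    have hdiv : (volume B' + volume (s ∩ B)) / volume B ≤ 1 := by
      rw [ENNReal.div_le_iff hBpos hBfin, one_mul]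
      exact hsum
    rw [ENNReal.add_div] at hdiv
    have hB'div : volume B' / volume B = k := by
      rw [hB'vol, mul_div_assoc, ENNReal.div_self hBpos hBfin, mul_one]
    rw [hB'div] at hdiv
    exact ENNReal.le_sub_of_add_le_left ENNReal.ofReal_ne_top hdiv
  -- contradiction with density 1
  have h1k : (1 : ENNReal) - k < 1 :=
    ENNReal.sub_lt_self ENNReal.one_ne_top one_ne_zero hk0
  have hev : ∀ᶠ r in nhdsWithin (0:ℝ) (Ioi 0),
      (1:ENNReal) - k < volume (s ∩ closedBall x r) / volume (closedBall x r) :=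
    hx.eventually (eventually_gt_nhds h1k)
  have hev2 : ∀ᶠ r in nhdsWithin (0:ℝ) (Ioi 0), r ∈ Ioo (0:ℝ) R :=
    Ioo_mem_nhdsGT_of_mem ⟨le_refl 0, hR⟩
  obtain ⟨r, h1, h2⟩ := (hev.and hev2).exists
  exact absurd (hratio r h2) (not_le.mpr h1)
end

section
/- Quadratic contact estimate used in the proofs of Theorems 2.8, 2.9, 6.2 and 6.4: let n ≥ 1, L ≥ 0 and h ≥ 0. Let w : ℝ^n → ℝ be differentiable at every point with Fréchet derivative Dw satisfying ‖Dw(x) − Dw(y)‖ ≤ L‖x − y‖ for all x, y ∈ ℝ^n. Let S ⊆ ℝ^n be a set of diameter at most h, and assume that the set {x ∈ S : w(x) = 0} has positive Lebesgue measure. Then |w(x)| ≤ (L/2) h² for every x ∈ S. -/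
open MeasureTheory Set Metric Filter Pointwise

variable {n : ℕ}

/-- Taylor estimate with Lipschitz derivative. -/
lemma taylor_aux (L : ℝ) (hL : 0 ≤ L) (w : EuclideanSpace ℝ (Fin n) → ℝ)
    (hw : Differentiable ℝ w)
    (hlip : ∀ x y, ‖fderiv ℝ w x - fderiv ℝ w y‖ ≤ L * ‖x - y‖)
    (a b : EuclideanSpace ℝ (Fin n)) :
    |w b - w a - fderiv ℝ w a (b - a)| ≤ L / 2 * ‖b - a‖ ^ 2 := by
  set v := b - a with hv
  have hcontD : Continuous fun x => fderiv ℝ w x := by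
    refine (LipschitzWith.of_dist_le_mul (K := L.toNNReal) fun x y => ?_).continuous
    rw [dist_eq_norm, dist_eq_norm, Real.coe_toNNReal L hL]
    exact hlip x y
  have hg : ∀ t : ℝ, HasDerivAt (fun t : ℝ => w (a + t • v))
      (fderiv ℝ w (a + t • v) v) t := by
    intro t
    have h1 : HasDerivAt (fun t : ℝ => a + t • v) v t := by
      simpa using ((hasDerivAt_id t).smul_const v).const_add a
    exact (hw (a + t • v)).hasFDerivAt.comp_hasDerivAt t h1
  have hφcont : Continuous fun t : ℝ => fderiv ℝ w (a + t • v) v := by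
    have : Continuous fun t : ℝ => a + t • v := by continuity
    exact (hcontD.comp this).clm_apply continuous_const
  have key : (∫ t in (0:ℝ)..1, fderiv ℝ w (a + t • v) v) = w b - w a := by
    rw [intervalIntegral.integral_eq_sub_of_hasDerivAt (fun t _ => hg t)
      (hφcont.intervalIntegrable 0 1)]
    simp [hv]
  have hrw : w b - w a - fderiv ℝ w a v
      = ∫ t in (0:ℝ)..1, (fderiv ℝ w (a + t • v) v - fderiv ℝ w a v) := by
    rw [intervalIntegral.integral_sub (hφcont.intervalIntegrable 0 1)
      intervalIntegrable_const, key, intervalIntegral.integral_const]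
    simp
  rw [hrw, ← Real.norm_eq_abs]
  have hb : ∀ t ∈ Set.uIoc (0:ℝ) 1,
      ‖fderiv ℝ w (a + t • v) v - fderiv ℝ w a v‖ ≤ L * ‖v‖ ^ 2 * t := by
    intro t ht
    rw [Set.uIoc_of_le zero_le_one] at ht
    have h1 : ‖fderiv ℝ w (a + t • v) v - fderiv ℝ w a v‖
        ≤ ‖fderiv ℝ w (a + t • v) - fderiv ℝ w a‖ * ‖v‖ := by
      simpa using (fderiv ℝ w (a + t • v) - fderiv ℝ w a).le_opNorm v
    have h2 : ‖fderiv ℝ w (a + t • v) - fderiv ℝ w a‖ ≤ L * (t * ‖v‖) := by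
      have := hlip (a + t • v) a
      simpa [norm_smul, abs_of_pos ht.1] using this
    calc ‖fderiv ℝ w (a + t • v) v - fderiv ℝ w a v‖
        ≤ L * (t * ‖v‖) * ‖v‖ := h1.trans (by
          exact mul_le_mul_of_nonneg_right h2 (norm_nonneg v))
      _ = L * ‖v‖ ^ 2 * t := by ring
  have hInt : IntervalIntegrable (fun t : ℝ => L * ‖v‖ ^ 2 * t) volume 0 1 :=
    (continuous_const.mul continuous_id).intervalIntegrable 0 1
  have := intervalIntegral.norm_integral_le_abs_of_norm_le
    (f := fun t : ℝ => fderiv ℝ w (a + t • v) v - fderiv ℝ w a v)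
    (g := fun t : ℝ => L * ‖v‖ ^ 2 * t) (μ := volume) (a := 0) (b := 1)
    ((ae_restrict_mem measurableSet_uIoc).mono hb) hInt
  refine this.trans ?_
  rw [intervalIntegral.integral_const_mul, integral_id]
  rw [abs_of_nonneg (by positivity)]
  ring_nf
  nlinarith [sq_nonneg ‖v‖, sq_nonneg (L * ‖v‖^2)]

/-- At a density point of the zero set, the derivative vanishes. -/
lemma fderiv_zero_at_density (L : ℝ) (hL : 0 ≤ L) (w : EuclideanSpace ℝ (Fin n) → ℝ)
    (hw : Differentiable ℝ w)
    (hlip : ∀ x y, ‖fderiv ℝ w x - fderiv ℝ w y‖ ≤ L * ‖x - y‖)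
    (Z : Set (EuclideanSpace ℝ (Fin n))) (hZ : ∀ y ∈ Z, w y = 0)
    (z : EuclideanSpace ℝ (Fin n)) (hzZ : z ∈ Z)
    (hd : Tendsto (fun r => volume (Z ∩ closedBall z r) / volume (closedBall z r))
      (nhdsWithin 0 (Set.Ioi 0)) (nhds 1)) :
    fderiv ℝ w z = 0 := by
  have hwz : w z = 0 := hZ z hzZ
  have key : ∀ u : EuclideanSpace ℝ (Fin n), ‖fderiv ℝ w z u‖ ≤ 0 := by
    intro u
    set C : ℝ := L / 2 * (‖u‖ + 1) ^ 2 + ‖fderiv ℝ w z‖ with hC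
    have hC0 : 0 ≤ C := by positivity
    have main : ∀ ε : ℝ, ε ∈ Set.Ioc (0:ℝ) 1 → ‖fderiv ℝ w z u‖ ≤ ε * C := by
      rintro ε ⟨hε0, hε1⟩
      have H1 : ∀ᶠ r in nhdsWithin (0:ℝ) (Set.Ioi 0),
          (Z ∩ ({z} + r • closedBall u ε)).Nonempty :=
        Measure.eventually_nonempty_inter_smul_of_density_one volume Z z hd _
          measurableSet_closedBall (measure_closedBall_pos volume u hε0).ne'
      have H2 : ∀ᶠ r in nhdsWithin (0:ℝ) (Set.Ioi 0), r ∈ Set.Ioc (0:ℝ) ε :=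
        eventually_of_mem (Ioc_mem_nhdsGT_of_mem ⟨le_rfl, hε0⟩) fun r hr => hr
      obtain ⟨r, hne, hr0, hrε⟩ := (H1.and H2).exists
      obtain ⟨y, hyZ, hymem⟩ := hne
      obtain ⟨v, hvmem, hyv⟩ : ∃ v ∈ closedBall u ε, y = z + r • v := by
        simp only [Set.singleton_add, Set.image_add_left, Set.mem_preimage,
          Set.mem_smul_set] at hymem
        obtain ⟨v, hv, hv'⟩ := hymem
        exact ⟨v, hv, by rw [hv']; abel⟩
      have hyz : y - z = r • v := by rw [hyv]; abel
      have htay := taylor_aux L hL w hw hlip z y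
      rw [hZ y hyZ, hwz, hyz] at htay
      have hDv : ‖fderiv ℝ w z v‖ ≤ L / 2 * r * ‖v‖ ^ 2 := by
        have h1 : r * ‖fderiv ℝ w z v‖ ≤ L / 2 * (r * ‖v‖) ^ 2 := by
          have : |fderiv ℝ w z (r • v)| = r * ‖fderiv ℝ w z v‖ := by
            rw [(fderiv ℝ w z).map_smul]
            simp [abs_mul, abs_of_pos hr0, Real.norm_eq_abs]
          calc r * ‖fderiv ℝ w z v‖ = |0 - 0 - fderiv ℝ w z (r • v)| := by
                rw [← this]; simp
            _ ≤ L / 2 * ‖r • v‖ ^ 2 := htay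
            _ = L / 2 * (r * ‖v‖) ^ 2 := by rw [norm_smul, Real.norm_eq_abs, abs_of_pos hr0]
        nlinarith [hr0]
      have hdvu : ‖v - u‖ ≤ ε := by
        have h := mem_closedBall.mp hvmem
        rwa [dist_eq_norm] at h
      have hvn : ‖v‖ ≤ ‖u‖ + 1 := by
        calc ‖v‖ = ‖u + (v - u)‖ := by rw [show u + (v - u) = v by abel]
          _ ≤ ‖u‖ + ‖v - u‖ := norm_add_le _ _
          _ ≤ ‖u‖ + 1 := by linarith
      have hsplit : fderiv ℝ w z u = fderiv ℝ w z v + fderiv ℝ w z (u - v) := by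
        rw [← map_add]; congr 1; abel
      have huv : ‖u - v‖ ≤ ε := by
        rwa [← norm_neg, neg_sub] at hdvu
      calc ‖fderiv ℝ w z u‖ ≤ ‖fderiv ℝ w z v‖ + ‖fderiv ℝ w z (u - v)‖ := by
            rw [hsplit]; exact norm_add_le _ _
        _ ≤ L / 2 * r * ‖v‖ ^ 2 + ‖fderiv ℝ w z‖ * ‖u - v‖ :=
            add_le_add hDv ((fderiv ℝ w z).le_opNorm _)
        _ ≤ L / 2 * ε * (‖u‖ + 1) ^ 2 + ‖fderiv ℝ w z‖ * ε := by
            have h3 : ‖v‖ ^ 2 ≤ (‖u‖ + 1) ^ 2 :=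
              pow_le_pow_left₀ (norm_nonneg v) hvn 2
            have h4 : L / 2 * r ≤ L / 2 * ε :=
              mul_le_mul_of_nonneg_left hrε (by positivity)
            have h5 : L / 2 * r * ‖v‖ ^ 2 ≤ L / 2 * ε * (‖u‖ + 1) ^ 2 :=
              mul_le_mul h4 h3 (by positivity) (by positivity)
            have h6 : ‖fderiv ℝ w z‖ * ‖u - v‖ ≤ ‖fderiv ℝ w z‖ * ε :=
              mul_le_mul_of_nonneg_left huv (norm_nonneg _)
            linarith
        _ = ε * C := by rw [hC]; ring
    have hlim : Tendsto (fun ε : ℝ => ε * C) (nhdsWithin 0 (Set.Ioi 0)) (nhds 0) := by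
      have := (continuous_id.mul (continuous_const (y := C))).tendsto (0 : ℝ)
      simpa [Pi.mul_def] using this.mono_left nhdsWithin_le_nhds
    exact ge_of_tendsto hlim
      (eventually_of_mem (Ioc_mem_nhdsGT_of_mem ⟨le_rfl, one_pos⟩) main)
  exact ContinuousLinearMap.ext fun u => by
    simpa using norm_le_zero_iff.mp (key u)

/-- **Quadratic contact estimate** (used in the proofs of Theorems 2.8, 2.9, 6.2 and
6.4): if `w : ℝⁿ → ℝ` is differentiable with `L`-Lipschitz Fréchet derivative, `S` is a
set of diameter at most `h`, and `{x ∈ S : w x = 0}` has positive Lebesgue measure, then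
`|w x| ≤ (L/2) h²` for every `x ∈ S`. -/
theorem quadratic_contact_estimate
    (n : ℕ) (hn : 1 ≤ n) (L h : ℝ) (hL : 0 ≤ L) (hh : 0 ≤ h)
    (w : EuclideanSpace ℝ (Fin n) → ℝ) (hw : Differentiable ℝ w)
    (hlip : ∀ x y, ‖fderiv ℝ w x - fderiv ℝ w y‖ ≤ L * ‖x - y‖)
    (S : Set (EuclideanSpace ℝ (Fin n)))
    (hdiam : EMetric.diam S ≤ ENNReal.ofReal h)
    (hpos : 0 < volume {x | x ∈ S ∧ w x = 0}) :
    ∀ x ∈ S, |w x| ≤ L / 2 * h ^ 2 := by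
  intro x hxS
  set Z : Set (EuclideanSpace ℝ (Fin n)) := {x | x ∈ S ∧ w x = 0} with hZdef
  set P : EuclideanSpace ℝ (Fin n) → Prop := fun z =>
    Tendsto (fun r => volume (Z ∩ closedBall z r) / volume (closedBall z r))
      (nhdsWithin 0 (Set.Ioi 0)) (nhds 1) with hPdef
  have hae : ∀ᵐ z ∂(volume.restrict Z), P z :=
    Besicovitch.ae_tendsto_measure_inter_div volume Z
  have hN : volume ({z | ¬ P z} ∩ Z) = 0 :=
    Measure.measure_inter_eq_zero_of_restrict (ae_iff.mp hae)
  have hsub : Z ⊆ ({z | P z} ∩ Z) ∪ ({z | ¬ P z} ∩ Z) := by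
    intro z hz
    by_cases hp : P z
    · exact Or.inl ⟨hp, hz⟩
    · exact Or.inr ⟨hp, hz⟩
  have hPpos : 0 < volume ({z | P z} ∩ Z) := by
    by_contra hcon
    push_neg at hcon
    have h0 : volume ({z | P z} ∩ Z) = 0 := le_antisymm hcon zero_le
    have : volume Z = 0 := by
      refine le_antisymm ?_ zero_le
      calc volume Z ≤ volume (({z | P z} ∩ Z) ∪ ({z | ¬ P z} ∩ Z)) := measure_mono hsub
        _ ≤ volume ({z | P z} ∩ Z) + volume ({z | ¬ P z} ∩ Z) := measure_union_le _ _
        _ = 0 := by rw [h0, hN, add_zero]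
    exact absurd this hpos.ne'
  obtain ⟨z, hPz, hzZ⟩ : ({z | P z} ∩ Z).Nonempty :=
    nonempty_of_measure_ne_zero hPpos.ne'
  have hD : fderiv ℝ w z = 0 :=
    fderiv_zero_at_density L hL w hw hlip Z (fun y hy => hy.2) z hzZ hPz
  have hdist : ‖x - z‖ ≤ h := by
    have he : edist x z ≤ ENNReal.ofReal h :=
      le_trans (EMetric.edist_le_diam_of_mem hxS hzZ.1) hdiam
    rw [edist_dist] at he
    rw [← dist_eq_norm]
    exact (ENNReal.ofReal_le_ofReal_iff hh).mp he
  have htay := taylor_aux L hL w hw hlip z x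
  rw [hzZ.2, hD] at htay
  simp only [ContinuousLinearMap.zero_apply, sub_zero] at htay
  calc |w x| ≤ L / 2 * ‖x - z‖ ^ 2 := htay
    _ ≤ L / 2 * h ^ 2 := by
        have := pow_le_pow_left₀ (norm_nonneg (x - z)) hdist 2
        exact mul_le_mul_of_nonneg_left this (by positivity)
end

section
/- Piecewise contact integral estimate (the key estimate behind G_D = O(h²) and E_D = O(h²) in Theorems 2.8, 2.9, 6.2 and 6.4): let n ≥ 1, L ≥ 0, C₂ ≥ 0 and h > 0. Let σ₁, …, σ_m be pairwise disjoint Lebesgue-measurable subsets of ℝ^n, each of finite measure and diameter at most h, pick xᵢ ∈ σᵢ for each i, and set Γ = σ₁ ∪ … ∪ σ_m. Let w : ℝ^n → ℝ be differentiable at every point with L-Lipschitz Fréchet derivative and w ≤ 0 on Γ. Let φ ∈ L²(Γ) satisfy φ ≤ 0 a.e. on Γ and φ·w = 0 a.e. on Γ, and let t ∈ L²(Γ) satisfy ‖t − w(xᵢ)‖_{L²(σᵢ)} ≤ C₂ h² λ(σᵢ)^{1/2} for every i (λ denoting Lebesgue measure). Then |∫_Γ t φ dλ| ≤ (C₂ +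 L/2) h² ‖φ‖_{L²(Γ)} λ(Γ)^{1/2}. -/
open MeasureTheory


/-- Cauchy–Schwarz for real integrals. -/
lemma cs_integral' {α : Type*} [MeasurableSpace α] {μ : Measure α} {f g : α → ℝ}
    (hf : MemLp f 2 μ) (hg : MemLp g 2 μ) :
    |∫ x, f x * g x ∂μ| ≤ Real.sqrt (∫ x, f x ^ 2 ∂μ) * Real.sqrt (∫ x, g x ^ 2 ∂μ) := by
  set F := hf.toLp f with hF
  set G := hg.toLp g with hG
  have hFf : ∀ᵐ x ∂μ, F x = f x := hf.coeFn_toLp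
  have hGg : ∀ᵐ x ∂μ, G x = g x := hg.coeFn_toLp
  have hinner : (inner ℝ F G : ℝ) = ∫ x, f x * g x ∂μ := by
    rw [MeasureTheory.L2.inner_def]
    apply integral_congr_ae
    filter_upwards [hFf, hGg] with x hx hy
    simp [hx, hy, RCLike.inner_apply, conj_trivial, mul_comm]
  have hnF : ‖F‖ = Real.sqrt (∫ x, f x ^ 2 ∂μ) := by
    have h1 : (∫ x, f x ^ 2 ∂μ) = (inner ℝ F F : ℝ) := by
      rw [MeasureTheory.L2.inner_def]
      apply integral_congr_ae
      filter_upwards [hFf] with x hx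
      simp [hx, RCLike.inner_apply, conj_trivial, sq]
    rw [h1, real_inner_self_eq_norm_sq, Real.sqrt_sq (norm_nonneg _)]
  have hnG : ‖G‖ = Real.sqrt (∫ x, g x ^ 2 ∂μ) := by
    have h1 : (∫ x, g x ^ 2 ∂μ) = (inner ℝ G G : ℝ) := by
      rw [MeasureTheory.L2.inner_def]
      apply integral_congr_ae
      filter_upwards [hGg] with x hx
      simp [hx, RCLike.inner_apply, conj_trivial, sq]
    rw [h1, real_inner_self_eq_norm_sq, Real.sqrt_sq (norm_nonneg _)]
  rw [← hinner, ← hnF, ← hnG]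
  exact abs_real_inner_le_norm F G

/-- Second-order Taylor bound for a function with Lipschitz derivative. -/
lemma taylor_lip {E : Type*} [NormedAddCommGroup E] [NormedSpace ℝ E]
    {w : E → ℝ} {L : ℝ} (hw : Differentiable ℝ w)
    (hlip : ∀ x y, ‖fderiv ℝ w x - fderiv ℝ w y‖ ≤ L * ‖x - y‖) (x y : E) :
    |w y - w x - fderiv ℝ w x (y - x)| ≤ L / 2 * ‖y - x‖ ^ 2 := by
  rcases eq_or_ne y x with rfl | hne
  · simp
  have hL : 0 ≤ L := by
    have h0 := (norm_nonneg (fderiv ℝ w x - fderiv ℝ w y)).trans (hlip x y)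
    have hxy : 0 < ‖x - y‖ := by
      rw [norm_pos_iff, sub_ne_zero]
      exact fun hxe => hne hxe.symm
    rw [mul_comm] at h0
    exact nonneg_of_mul_nonneg_right h0 hxy
  set v := y - x with hv
  set f' : ℝ → ℝ := fun s => fderiv ℝ w (x + s • v) v with hf'def
  have hderiv : ∀ s : ℝ, HasDerivAt (fun s : ℝ => w (x + s • v)) (f' s) s := by
    intro s
    have h1 : HasDerivAt (fun s : ℝ => x + s • v) v s := by
      simpa using ((hasDerivAt_id s).smul_const v).const_add x
    exact ((hw (x + s • v)).hasFDerivAt.comp_hasDerivAt s h1)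
  have hdiff : ∀ s u : ℝ, |f' s - f' u| ≤ L * ‖v‖ ^ 2 * |s - u| := by
    intro s u
    have h1 : |f' s - f' u| ≤ ‖fderiv ℝ w (x + s • v) - fderiv ℝ w (x + u • v)‖ * ‖v‖ := by
      have h2 := (fderiv ℝ w (x + s • v) - fderiv ℝ w (x + u • v)).le_opNorm v
      simpa [hf'def] using h2
    have h3 : ‖fderiv ℝ w (x + s • v) - fderiv ℝ w (x + u • v)‖ ≤ L * (|s - u| * ‖v‖) := by
      have h4 := hlip (x + s • v) (x + u • v)
      have he : (x + s • v) - (x + u • v) = (s - u) • v := by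
        rw [sub_smul]; abel
      rw [he] at h4
      simpa [norm_smul, Real.norm_eq_abs, mul_assoc] using h4
    calc |f' s - f' u| ≤ (L * (|s - u| * ‖v‖)) * ‖v‖ :=
          h1.trans (mul_le_mul_of_nonneg_right h3 (norm_nonneg _))
      _ = L * ‖v‖ ^ 2 * |s - u| := by ring
  have hcont : Continuous f' := by
    refine (LipschitzWith.of_dist_le_mul (K := Real.toNNReal (L * ‖v‖ ^ 2)) ?_).continuous
    intro s u
    rw [Real.dist_eq, Real.dist_eq]
    exact (hdiff s u).trans
      (mul_le_mul_of_nonneg_right (Real.le_coe_toNNReal _) (abs_nonneg _))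
  have hFTC : ∫ s in (0:ℝ)..1, f' s = w y - w x := by
    have := intervalIntegral.integral_eq_sub_of_hasDerivAt (f := fun s : ℝ => w (x + s • v))
      (f' := f') (a := 0) (b := 1) (fun s _ => hderiv s) (hcont.intervalIntegrable 0 1)
    simpa [hv] using this
  have hf'0 : f' 0 = fderiv ℝ w x (y - x) := by simp [hf'def, hv]
  have hsplit : w y - w x - fderiv ℝ w x (y - x) = ∫ s in (0:ℝ)..1, (f' s - f' 0) := by
    rw [intervalIntegral.integral_sub (hcont.intervalIntegrable 0 1)
      (intervalIntegrable_const), hFTC]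
    simp [hf'0]
  rw [hsplit]
  have hbound : |∫ s in (0:ℝ)..1, (f' s - f' 0)| ≤ |∫ s in (0:ℝ)..1, L * ‖v‖ ^ 2 * s| := by
    rw [← Real.norm_eq_abs]
    apply intervalIntegral.norm_integral_le_abs_of_norm_le
    · filter_upwards [ae_restrict_mem measurableSet_uIoc] with s hs
      rw [Set.uIoc_of_le (by norm_num : (0:ℝ) ≤ 1)] at hs
      have := hdiff s 0
      rw [sub_zero, abs_of_pos hs.1] at this
      simpa [Real.norm_eq_abs] using this
    · apply Continuous.intervalIntegrable
      continuity
  have hcalc : ∫ s in (0:ℝ)..1, L * ‖v‖ ^ 2 * s = L / 2 * ‖v‖ ^ 2 := by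
    rw [intervalIntegral.integral_const_mul, integral_id]
    ring
  refine hbound.trans ?_
  rw [hcalc]
  rw [abs_of_nonneg (by positivity)]

lemma ae_fderiv_eq_zero_of_eq_zero_on {n : ℕ} (hn : 1 ≤ n)
    {w : EuclideanSpace ℝ (Fin n) → ℝ} (hw : Differentiable ℝ w)
    {Z : Set (EuclideanSpace ℝ (Fin n))} (hZ : MeasurableSet Z)
    (hZ0 : ∀ x ∈ Z, w x = 0) :
    ∀ᵐ x ∂(volume.restrict Z), fderiv ℝ w x = 0 := by
  set e : EuclideanSpace ℝ (Fin n) := EuclideanSpace.single ⟨0, hn⟩ (1:ℝ) with he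
  have hene : e ≠ 0 := by
    intro h
    have : ‖e‖ = 1 := by rw [he, EuclideanSpace.norm_single]; norm_num
    rw [h, norm_zero] at this
    norm_num at this
  set f : EuclideanSpace ℝ (Fin n) → EuclideanSpace ℝ (Fin n) := fun x => w x • e with hf
  have happrox : ApproximatesLinearOn f (0 : EuclideanSpace ℝ (Fin n) →L[ℝ]
      EuclideanSpace ℝ (Fin n)) Z 0 := by
    intro x hx y hy
    simp [hf, hZ0 x hx, hZ0 y hy]
  have hmain := happrox.norm_fderiv_sub_le (μ := volume) hZ
    (fun x => (fderiv ℝ w x).smulRight e)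
    (fun x _ => ((hw x).hasFDerivAt.smul_const e).hasFDerivWithinAt)
  filter_upwards [hmain] with x hx
  have h0 : (fderiv ℝ w x).smulRight e = 0 := by
    have := hx
    simp only [sub_zero, nonpos_iff_eq_zero, nnnorm_eq_zero] at this
    exact this
  ext v
  have := congrFun (congrArg DFunLike.coe h0) v
  simp only [ContinuousLinearMap.smulRight_apply, ContinuousLinearMap.zero_apply] at this
  rcases smul_eq_zero.mp this with h | h
  · simpa using h
  · exact absurd h hene

/-- **Piecewise contact integral estimate** (the key estimate behind `G_D = O(h²)` and
`E_D = O(h²)` in Theorems 2.8, 2.9, 6.2 and 6.4).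

Let `σ₁, …, σ_m` be pairwise disjoint measurable subsets of `ℝⁿ`, each of finite measure
and diameter `≤ h`, with chosen points `xᵢ ∈ σᵢ`, and let `Γ = ⋃ᵢ σᵢ`. Let `w` be
differentiable with `L`-Lipschitz Fréchet derivative and `w ≤ 0` on `Γ`. Let
`φ ∈ L²(Γ)` satisfy `φ ≤ 0` and `φ·w = 0` a.e. on `Γ`, and let `t ∈ L²(Γ)` satisfy
`‖t - w(xᵢ)‖_{L²(σᵢ)} ≤ C₂ h² λ(σᵢ)^{1/2}` for every `i`. Then
`|∫_Γ t φ dλ| ≤ (C₂ + L/2) h² ‖φ‖_{L²(Γ)} λ(Γ)^{1/2}`. -/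
theorem piecewise_contact_integral_estimate
    (n : ℕ) (hn : 1 ≤ n) (L C₂ h : ℝ) (hL : 0 ≤ L) (hC₂ : 0 ≤ C₂) (hh : 0 < h)
    (m : ℕ) (σ : Fin m → Set (EuclideanSpace ℝ (Fin n)))
    (hσmeas : ∀ i, MeasurableSet (σ i))
    (hσfin : ∀ i, volume (σ i) < ⊤)
    (hσdiam : ∀ i, EMetric.diam (σ i) ≤ ENNReal.ofReal h)
    (hσdisj : ∀ i j, i ≠ j → Disjoint (σ i) (σ j))
    (xpt : Fin m → EuclideanSpace ℝ (Fin n)) (hxpt : ∀ i, xpt i ∈ σ i)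
    (w : EuclideanSpace ℝ (Fin n) → ℝ) (hw : Differentiable ℝ w)
    (hlip : ∀ x y, ‖fderiv ℝ w x - fderiv ℝ w y‖ ≤ L * ‖x - y‖)
    (hwle : ∀ x ∈ ⋃ i, σ i, w x ≤ 0)
    (phi t : Lp ℝ 2 (volume.restrict (⋃ i, σ i)))
    (hphile : ∀ᵐ x ∂(volume.restrict (⋃ i, σ i)), phi x ≤ 0)
    (hphiw : ∀ᵐ x ∂(volume.restrict (⋃ i, σ i)), phi x * w x = 0)
    (ht : ∀ i, ∫ x in σ i, (t x - w (xpt i)) ^ 2 ∂(volume.restrict (⋃ i, σ i))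
        ≤ (C₂ * h ^ 2) ^ 2 * (volume (σ i)).toReal) :
    |∫ x, t x * phi x ∂(volume.restrict (⋃ i, σ i))|
      ≤ (C₂ + L / 2) * h ^ 2 * ‖phi‖ * Real.sqrt (volume (⋃ i, σ i)).toReal := by
  classical
  have hΓmeas : MeasurableSet (⋃ i, σ i) := MeasurableSet.iUnion hσmeas
  have hpair : Pairwise (Function.onFun Disjoint σ) := fun i j hij => hσdisj i j hij
  have hsub : ∀ i, σ i ⊆ ⋃ i, σ i := fun i => Set.subset_iUnion σ i
  have hΓvol : volume (⋃ i, σ i) = ∑ i, volume (σ i) := by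
    rw [measure_iUnion hpair hσmeas, tsum_fintype]
  have hΓfin : volume (⋃ i, σ i) < ⊤ := by
    rw [hΓvol]; exact ENNReal.sum_lt_top.mpr fun i _ => hσfin i
  haveI hνfin : IsFiniteMeasure (volume.restrict (⋃ i, σ i)) :=
    ⟨by rwa [Measure.restrict_apply_univ]⟩
  have hres : ∀ i, (volume.restrict (⋃ i, σ i)).restrict (σ i) = volume.restrict (σ i) :=
    fun i => by
      rw [Measure.restrict_restrict (hσmeas i), Set.inter_eq_self_of_subset_left (hsub i)]
  have hphimem : MemLp (⇑phi) 2 (volume.restrict (⋃ i, σ i)) := Lp.memLp phi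
  have htmem : MemLp (⇑t) 2 (volume.restrict (⋃ i, σ i)) := Lp.memLp t
  have hFint : Integrable (fun x => t x * phi x) (volume.restrict (⋃ i, σ i)) := by
    have := L2.integrable_inner (𝕜 := ℝ) t phi
    simpa [RCLike.inner_apply, conj_trivial, mul_comm] using this
  -- a.e. vanishing of the derivative on the contact set
  set Z : Set (EuclideanSpace ℝ (Fin n)) := (⋃ i, σ i) ∩ w ⁻¹' {0} with hZdef
  have hZmeas : MeasurableSet Z :=
    hΓmeas.inter (hw.continuous.measurable (measurableSet_singleton 0))
  have hfd0 := ae_fderiv_eq_zero_of_eq_zero_on hn hw hZmeas (fun x hx => hx.2)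
  have hfdν : ∀ᵐ x ∂(volume.restrict (⋃ i, σ i)), x ∈ Z → fderiv ℝ w x = 0 := by
    have h1 : volume.restrict Z {x | ¬ fderiv ℝ w x = 0} = 0 := ae_iff.mp hfd0
    have h2 : volume ({x | ¬ fderiv ℝ w x = 0} ∩ Z) = 0 := by
      rwa [Measure.restrict_apply' hZmeas] at h1
    rw [ae_iff]
    have hss : {x | ¬ (x ∈ Z → fderiv ℝ w x = 0)} ⊆ {x | ¬ fderiv ℝ w x = 0} ∩ Z := by
      intro x hx
      push_neg at hx
      exact ⟨hx.2, hx.1⟩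
    have hle : volume.restrict (⋃ i, σ i) ({x | ¬ fderiv ℝ w x = 0} ∩ Z)
        ≤ volume ({x | ¬ fderiv ℝ w x = 0} ∩ Z) := by
      rw [Measure.restrict_apply' hΓmeas]
      exact measure_mono Set.inter_subset_left
    exact le_antisymm ((measure_mono hss).trans (hle.trans h2.le)) (zero_le)
  -- pointwise a.e. key bound
  have hkey : ∀ᵐ x ∂(volume.restrict (⋃ i, σ i)), ∀ i : Fin m, x ∈ σ i →
      |w (xpt i) * phi x| ≤ L / 2 * h ^ 2 * |phi x| := by
    filter_upwards [hphiw, hfdν] with x hx1 hx2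
    intro i hxi
    rcases eq_or_ne (phi x) 0 with hphi0 | hphi0
    · simp [hphi0]
    · have hwx : w x = 0 := by
        rcases mul_eq_zero.mp hx1 with h' | h'
        · exact absurd h' hphi0
        · exact h'
      have hxΓ : x ∈ ⋃ i, σ i := Set.mem_iUnion.mpr ⟨i, hxi⟩
      have hZx : x ∈ Z := ⟨hxΓ, by simpa using hwx⟩
      have hfd := hx2 hZx
      have htay := taylor_lip hw hlip x (xpt i)
      rw [hwx, hfd] at htay
      simp only [sub_zero, ContinuousLinearMap.zero_apply] at htay
      have hdist : ‖xpt i - x‖ ≤ h := by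
        have h1 : edist (xpt i) x ≤ EMetric.diam (σ i) :=
          EMetric.edist_le_diam_of_mem (hxpt i) hxi
        have h2 : edist (xpt i) x ≤ ENNReal.ofReal h := h1.trans (hσdiam i)
        rw [edist_dist] at h2
        rw [← dist_eq_norm]
        exact (ENNReal.ofReal_le_ofReal_iff hh.le).mp h2
      have h3 : |w (xpt i)| ≤ L / 2 * h ^ 2 := by
        refine htay.trans ?_
        have hsq : ‖xpt i - x‖ ^ 2 ≤ h ^ 2 := pow_le_pow_left₀ (norm_nonneg _) hdist 2
        exact mul_le_mul_of_nonneg_left hsq (div_nonneg hL (by norm_num))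
      rw [abs_mul]
      exact mul_le_mul_of_nonneg_right h3 (abs_nonneg _)
  -- per-piece estimate
  have key : ∀ i : Fin m, |∫ x in σ i, t x * phi x ∂volume|
      ≤ (C₂ + L / 2) * h ^ 2 * (Real.sqrt (volume (σ i)).toReal *
        Real.sqrt (∫ x in σ i, (phi x) ^ 2 ∂volume)) := by
    intro i
    haveI : IsFiniteMeasure (volume.restrict (σ i)) :=
      ⟨by rw [Measure.restrict_apply_univ]; exact hσfin i⟩
    have hφi : MemLp (⇑phi) 2 (volume.restrict (σ i)) := hres i ▸ hphimem.restrict (σ i)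
    have hti : MemLp (⇑t) 2 (volume.restrict (σ i)) := hres i ▸ htmem.restrict (σ i)
    have htci : MemLp (fun x => t x - w (xpt i)) 2 (volume.restrict (σ i)) :=
      hti.sub (memLp_const _)
    have hφinti : Integrable (⇑phi) (volume.restrict (σ i)) := hφi.integrable one_le_two
    have hFon : IntegrableOn (fun x => t x * phi x) (⋃ i, σ i) volume := hFint
    have hFi : Integrable (fun x => t x * phi x) (volume.restrict (σ i)) :=
      hFon.mono_set (hsub i)
    have hconsti : Integrable (fun x => w (xpt i) * phi x) (volume.restrict (σ i)) :=
      hφinti.const_mul _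
    have hsplitint : Integrable (fun x => (t x - w (xpt i)) * phi x)
        (volume.restrict (σ i)) := by
      have he : (fun x => (t x - w (xpt i)) * phi x)
          = fun x => t x * phi x - w (xpt i) * phi x := by ext x; ring
      rw [he]; exact hFi.sub hconsti
    have hsplit : ∫ x in σ i, t x * phi x ∂volume
        = (∫ x in σ i, (t x - w (xpt i)) * phi x ∂volume)
          + ∫ x in σ i, w (xpt i) * phi x ∂volume := by
      rw [← integral_add hsplitint hconsti]
      congr 1
      ext x
      ring
    have hB1 : |∫ x in σ i, (t x - w (xpt i)) * phi x ∂volume|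
        ≤ (C₂ * h ^ 2 * Real.sqrt (volume (σ i)).toReal)
          * Real.sqrt (∫ x in σ i, (phi x) ^ 2 ∂volume) := by
      refine (cs_integral' htci hφi).trans ?_
      refine mul_le_mul_of_nonneg_right ?_ (Real.sqrt_nonneg _)
      have hti2 := ht i
      rw [hres i] at hti2
      refine (Real.sqrt_le_sqrt hti2).trans ?_
      rw [Real.sqrt_mul (sq_nonneg _), Real.sqrt_sq (mul_nonneg hC₂ (sq_nonneg h))]
    have hB2 : |∫ x in σ i, w (xpt i) * phi x ∂volume|
        ≤ (L / 2 * h ^ 2 * Real.sqrt (volume (σ i)).toReal)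
          * Real.sqrt (∫ x in σ i, (phi x) ^ 2 ∂volume) := by
      have hkeyi : ∀ᵐ x ∂(volume.restrict (σ i)),
          |w (xpt i) * phi x| ≤ L / 2 * h ^ 2 * |phi x| := by
        have hk := ae_restrict_of_ae (s := σ i) hkey
        rw [hres i] at hk
        filter_upwards [hk, ae_restrict_mem (hσmeas i)] with x hx hxi
        exact hx i hxi
      have habs : |∫ x in σ i, w (xpt i) * phi x ∂volume|
          ≤ ∫ x in σ i, L / 2 * h ^ 2 * |phi x| ∂volume := by
        rw [← Real.norm_eq_abs]
        apply norm_integral_le_of_norm_le ((hφinti.abs).const_mul _)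
        filter_upwards [hkeyi] with x hx
        rw [Real.norm_eq_abs]
        exact hx
      refine habs.trans ?_
      rw [integral_const_mul]
      have hcs : ∫ x in σ i, |phi x| ∂volume
          ≤ Real.sqrt (volume (σ i)).toReal
            * Real.sqrt (∫ x in σ i, (phi x) ^ 2 ∂volume) := by
        have h1 := cs_integral' (memLp_const (μ := volume.restrict (σ i)) (1 : ℝ)) hφi.abs
        simp only [Pi.abs_apply] at h1
        have h2 : ∫ x in σ i, (1 : ℝ) * |phi x| ∂volume = ∫ x in σ i, |phi x| ∂volume := by
          simp
        have h3 : ∫ x in σ i, ((1 : ℝ)) ^ 2 ∂volume = (volume (σ i)).toReal := by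
          simp; rfl
        have h4 : ∫ x in σ i, (|phi x|) ^ 2 ∂volume = ∫ x in σ i, (phi x) ^ 2 ∂volume := by
          apply integral_congr_ae
          filter_upwards with x
          rw [sq_abs]
        rw [h2, h3, h4] at h1
        exact (le_abs_self _).trans h1
      have hnn : (0:ℝ) ≤ L / 2 * h ^ 2 :=
        mul_nonneg (div_nonneg hL (by norm_num)) (sq_nonneg h)
      calc L / 2 * h ^ 2 * ∫ x in σ i, |phi x| ∂volume
          ≤ L / 2 * h ^ 2 * (Real.sqrt (volume (σ i)).toReal
            * Real.sqrt (∫ x in σ i, (phi x) ^ 2 ∂volume)) :=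
            mul_le_mul_of_nonneg_left hcs hnn
        _ = (L / 2 * h ^ 2 * Real.sqrt (volume (σ i)).toReal)
            * Real.sqrt (∫ x in σ i, (phi x) ^ 2 ∂volume) := by ring
    calc |∫ x in σ i, t x * phi x ∂volume|
        ≤ |∫ x in σ i, (t x - w (xpt i)) * phi x ∂volume|
          + |∫ x in σ i, w (xpt i) * phi x ∂volume| := by rw [hsplit]; exact abs_add_le _ _
      _ ≤ (C₂ * h ^ 2 * Real.sqrt (volume (σ i)).toReal)
            * Real.sqrt (∫ x in σ i, (phi x) ^ 2 ∂volume)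
          + (L / 2 * h ^ 2 * Real.sqrt (volume (σ i)).toReal)
            * Real.sqrt (∫ x in σ i, (phi x) ^ 2 ∂volume) := add_le_add hB1 hB2
      _ = (C₂ + L / 2) * h ^ 2 * (Real.sqrt (volume (σ i)).toReal
            * Real.sqrt (∫ x in σ i, (phi x) ^ 2 ∂volume)) := by ring
  -- summation
  have hsum : ∫ x, t x * phi x ∂(volume.restrict (⋃ i, σ i))
      = ∑ i, ∫ x in σ i, t x * phi x ∂volume := by
    have := integral_iUnion hσmeas hpair
      (hFint : IntegrableOn (fun x => t x * phi x) (⋃ i, σ i) volume)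
    rw [tsum_fintype] at this
    exact this
  have hφ2int : IntegrableOn (fun x => (phi x) ^ 2) (⋃ i, σ i) volume := hphimem.integrable_sq
  have hsuma : ∫ x, (phi x) ^ 2 ∂(volume.restrict (⋃ i, σ i))
      = ∑ i, ∫ x in σ i, (phi x) ^ 2 ∂volume := by
    have := integral_iUnion hσmeas hpair hφ2int
    rw [tsum_fintype] at this
    exact this
  have hnormphi : ∫ x, (phi x) ^ 2 ∂(volume.restrict (⋃ i, σ i)) = ‖phi‖ ^ 2 := by
    have h1 : (inner ℝ phi phi : ℝ) = ∫ x, (phi x) ^ 2 ∂(volume.restrict (⋃ i, σ i)) := by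
      rw [MeasureTheory.L2.inner_def]
      apply integral_congr_ae
      filter_upwards with x
      simp [RCLike.inner_apply, conj_trivial, sq]
    rw [← h1, real_inner_self_eq_norm_sq]
  have hvol : (volume (⋃ i, σ i)).toReal = ∑ i, (volume (σ i)).toReal := by
    rw [hΓvol, ENNReal.toReal_sum (fun i _ => (hσfin i).ne)]
  have hCnn : (0:ℝ) ≤ (C₂ + L / 2) * h ^ 2 :=
    mul_nonneg (add_nonneg hC₂ (div_nonneg hL (by norm_num))) (sq_nonneg h)
  calc |∫ x, t x * phi x ∂(volume.restrict (⋃ i, σ i))|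
      ≤ ∑ i, |∫ x in σ i, t x * phi x ∂volume| := by
        rw [hsum]; exact Finset.abs_sum_le_sum_abs _ _
    _ ≤ ∑ i, (C₂ + L / 2) * h ^ 2 * (Real.sqrt (volume (σ i)).toReal
          * Real.sqrt (∫ x in σ i, (phi x) ^ 2 ∂volume)) :=
        Finset.sum_le_sum fun i _ => key i
    _ = (C₂ + L / 2) * h ^ 2 * ∑ i, Real.sqrt (volume (σ i)).toReal
          * Real.sqrt (∫ x in σ i, (phi x) ^ 2 ∂volume) := by rw [Finset.mul_sum]
    _ ≤ (C₂ + L / 2) * h ^ 2 * (Real.sqrt (∑ i, (volume (σ i)).toReal)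
          * Real.sqrt (∑ i, ∫ x in σ i, (phi x) ^ 2 ∂volume)) := by
        refine mul_le_mul_of_nonneg_left ?_ hCnn
        exact Real.sum_sqrt_mul_sqrt_le _ (fun i => ENNReal.toReal_nonneg)
          (fun i => integral_nonneg fun x => sq_nonneg _)
    _ = (C₂ + L / 2) * h ^ 2 * ‖phi‖ * Real.sqrt (volume (⋃ i, σ i)).toReal := by
        rw [← hvol, ← hsuma, hnormphi, Real.sqrt_sq (norm_nonneg _)]
        ring
end
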